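/- (Proposition 4: cardinality bound for the multi-source inner bound.) The region R_i is unchanged if one additionally requires that each auxiliary random variable U_k take at most |𝒳_k| + 4^K values, for every k ∈ {1,…,K}. -/

import Mathlib

open scoped BigOperators Classical

namespace Biclustering

variable {α β γ σ : Type*}

/-- A probability mass function on a finite type. -/
def IsPMF [Fintype α] (p : α → ℝ) : Prop := (∀ a, 0 ≤ p a) ∧ ∑ a, p a = 1

/-- Shannon entropy (in nats) of a pmf on a finite type. -/
noncomputable def ent [Fintype α] (p : α → ℝ) : ℝ := - ∑ a, p a * Real.log (p a)

/-- Pushforward (distribution of `f` under `p`). -/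
noncomputable def pmap [Fintype α] (f : α → β) (p : α → ℝ) : β → ℝ :=
  fun b => ∑ a, if f a = b then p a else 0

/-- Entropy of the random variable `f` under the joint pmf `p`. -/
noncomputable def Hof [Fintype α] [Fintype β] (p : α → ℝ) (f : α → β) : ℝ := ent (pmap f p)

/-- Mutual information `I(f; g)` under the joint pmf `p`. -/
noncomputable def MI [Fintype α] [Fintype β] [Fintype γ] (p : α → ℝ) (f : α → β) (g : α → γ) : ℝ :=
  Hof p f + Hof p g - Hof p (fun a => (f a, g a))

/-- Conditional mutual information `I(f; g | m)` under the joint pmf `p`. -/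
noncomputable def CMI [Fintype α] [Fintype β] [Fintype γ] [Fintype σ]
    (p : α → ℝ) (f : α → β) (g : α → γ) (m : α → σ) : ℝ :=
  Hof p (fun a => (f a, m a)) + Hof p (fun a => (g a, m a))
    - Hof p (fun a => (f a, g a, m a)) - Hof p m

/-- `f` and `g` are conditionally independent given `m` (a Markov chain `f – m – g`). -/
def CondIndep [Fintype α] (p : α → ℝ) (f : α → β) (g : α → γ) (m : α → σ) : Prop :=
  ∀ b c s, pmap (fun a => (f a, g a, m a)) p (b, c, s) * pmap m p s
    = pmap (fun a => (f a, m a)) p (b, s) * pmap (fun a => (g a, m a)) p (c, s)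

/-- The pmf of `n` i.i.d. copies of a source with pmf `p`. -/
noncomputable def iid [Fintype α] (n : ℕ) (p : α → ℝ) : (Fin n → α) → ℝ :=
  fun x => ∏ i, p (x i)

/-- The index set `Ω`: pairs of nonempty disjoint subsets of `{1, …, K}`. -/
def Omega (K : ℕ) : Type :=
  {AB : Finset (Fin K) × Finset (Fin K) // AB.1.Nonempty ∧ AB.2.Nonempty ∧ Disjoint AB.1 AB.2}

variable {K : ℕ}

/-- Restriction of a tuple to the coordinates in a subset `A`. -/
def restr {𝒯 : Fin K → Type} (A : Finset (Fin K)) (x : ∀ k, 𝒯 k) :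
    ∀ k : {k // k ∈ A}, 𝒯 k.1 :=
  fun k => x k.1

variable {𝒳 : Fin K → Type} [∀ k, Fintype (𝒳 k)]

/-- `(μ_Ω, R_K)` is achievable for the multi-source biclustering problem with source pmf `p`. -/
def AchievableM (p : (∀ k, 𝒳 k) → ℝ) (μ : Omega K → ℝ) (R : Fin K → ℝ) : Prop :=
  ∃ (n : ℕ) (M : Fin K → ℕ) (f : ∀ k, (Fin n → 𝒳 k) → Fin (M k)),
    0 < n ∧ (∀ k, Real.log (M k) ≤ n * R k) ∧
    ∀ AB : Omega K,
      μ AB ≤ (MI (iid n p)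
        (fun ω => fun k : {k // k ∈ AB.1.1} => f k.1 (fun i => ω i k.1))
        (fun ω => fun k : {k // k ∈ AB.1.2} => f k.1 (fun i => ω i k.1))) / n

/-- The Markov-structure requirement for the inner bound: `q` is a joint pmf of
`(U_1, …, U_K, X_1, …, X_K)` with `X`-marginal `p` such that for every `k`, the auxiliary
`U_k` is conditionally independent of `(X_{K∖k}, U_{K∖k})` given `X_k`. -/
def InnerWitnessM {𝒰 : Fin K → Type} [∀ k, Fintype (𝒰 k)]
    (p : (∀ k, 𝒳 k) → ℝ) (q : ((∀ k, 𝒰 k) × (∀ k, 𝒳 k)) → ℝ) : Prop :=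
  IsPMF q ∧ pmap Prod.snd q = p ∧
    ∀ k : Fin K,
      CondIndep q (fun w => w.1 k)
        (fun w => (fun j : {j : Fin K // j ≠ k} => w.2 j.1,
                   fun j : {j : Fin K // j ≠ k} => w.1 j.1))
        (fun w => w.2 k)

/-- The binning rate/relevance constraints of the inner bound `R_i` for a point
`t = (μ_Ω, R_K)`. -/
def InnerIneqM {𝒰 : Fin K → Type} [∀ k, Fintype (𝒰 k)]
    (q : ((∀ k, 𝒰 k) × (∀ k, 𝒳 k)) → ℝ)
    (t : (Omega K → ℝ) × (Fin K → ℝ)) : Prop :=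
  ∀ AB : Omega K, ∃ Aa Ab Ba Bb : Finset (Fin K),
    Ab ⊆ Aa ∧ Aa ⊆ AB.1.1 ∧ Bb ⊆ Ba ∧ Ba ⊆ AB.1.2 ∧
    (∀ A' ⊆ Aa, (A' ∩ Ab).Nonempty →
      CMI q (fun w => restr A' w.2) (fun w => restr A' w.1)
          (fun w => restr (Aa \ A') w.1)
        ≤ ∑ k ∈ A', t.2 k) ∧
    (∀ B' ⊆ Ba, (B' ∩ Bb).Nonempty →
      CMI q (fun w => restr B' w.2) (fun w => restr B' w.1)
          (fun w => restr (Ba \ B') w.1)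
        ≤ ∑ k ∈ B', t.2 k) ∧
    t.1 AB ≤ MI q (fun w => restr Ab w.1) (fun w => restr Bb w.1)

/-- The multi-source inner-bound region `R_i`. -/
def RiM (p : (∀ k, 𝒳 k) → ℝ) : Set ((Omega K → ℝ) × (Fin K → ℝ)) :=
  { t | ∃ (𝒰 : Fin K → Type) (_ : ∀ k, Fintype (𝒰 k))
      (q : ((∀ k, 𝒰 k) × (∀ k, 𝒳 k)) → ℝ),
      InnerWitnessM p q ∧ InnerIneqM q t }


/-- The multi-source inner-bound region `R_i` with the additional cardinality constraint
`|𝒰_k| ≤ |𝒳_k| + 4^K` for every `k`. -/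
def RiMBounded (p : (∀ k, 𝒳 k) → ℝ) : Set ((Omega K → ℝ) × (Fin K → ℝ)) :=
  { t | ∃ c : Fin K → ℕ, (∀ k, c k ≤ Fintype.card (𝒳 k) + 4 ^ K) ∧
      ∃ q : ((∀ k, Fin (c k)) × (∀ k, 𝒳 k)) → ℝ,
        InnerWitnessM p q ∧ InnerIneqM q t }

set_option linter.unusedSectionVars false

section Infra

variable {α β γ σ τ : Type*} [Fintype α]

lemma pmap_nonneg {p : α → ℝ} (hp : ∀ a, 0 ≤ p a) (f : α → β) (b : β) :
    0 ≤ pmap f p b := by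
  refine Finset.sum_nonneg fun a _ => ?_
  split <;> simp [hp a]

lemma sum_pmap [Fintype β] (f : α → β) (p : α → ℝ) : ∑ b, pmap f p b = ∑ a, p a := by
  unfold pmap
  rw [Finset.sum_comm]
  simp

lemma pmap_comp [Fintype β] (f : α → β) (g : β → γ) (p : α → ℝ) :
    pmap (fun a => g (f a)) p = pmap g (pmap f p) := by
  funext c
  unfold pmap
  have h1 : ∀ b : β, (if g b = c then ∑ a, if f a = b then p a else 0 else 0)
      = ∑ a, if f a = b then (if g b = c then p a else 0) else 0 := by
    intro b; split <;> simp
  rw [Finset.sum_congr rfl fun b _ => h1 b, Finset.sum_comm]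
  refine Finset.sum_congr rfl fun a _ => ?_
  simp

lemma pmap_apply_inj {f : α → β} (hf : Function.Injective f) (p : α → ℝ) (a : α) :
    pmap f p (f a) = p a := by
  unfold pmap
  simp [hf.eq_iff]

lemma pmap_equiv_apply {α' : Type*} [Fintype α'] (E : α' ≃ α) (p : α' → ℝ) (a : α) :
    pmap (⇑E) p a = p (E.symm a) := by
  unfold pmap
  simp [Equiv.apply_eq_iff_eq_symm_apply]

/-- Reindexing a pmf along an equivalence of sample spaces. -/
lemma pmap_precomp {α' : Type*} [Fintype α'] (E : α' ≃ α) (q : α → ℝ) (h : α → β) :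
    pmap (fun a' => h (E a')) (fun a' => q (E a')) = pmap h q := by
  funext b
  exact Equiv.sum_comp E (fun a => if h a = b then q a else 0)

lemma pmap_fst_apply [Fintype β] [Fintype γ] (P : β × γ → ℝ) (b : β) :
    pmap Prod.fst P b = ∑ c, P (b, c) := by
  unfold pmap
  rw [Fintype.sum_prod_type, Finset.sum_comm]
  simp

lemma pmap_snd_apply [Fintype β] [Fintype γ] (P : β × γ → ℝ) (c : γ) :
    pmap Prod.snd P c = ∑ b, P (b, c) := by
  unfold pmap
  rw [Fintype.sum_prod_type]
  simp

lemma pmap_le_comp {p : α → ℝ} (hp : ∀ a, 0 ≤ p a) (f : α → β) (φ : β → γ) (z : β) :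
    pmap f p z ≤ pmap (fun a => φ (f a)) p (φ z) := by
  refine Finset.sum_le_sum fun a _ => ?_
  by_cases h : f a = z
  · simp [h]
  · simp only [h, if_false]
    split <;> simp [hp a]

lemma apply_le_pmap {p : α → ℝ} (hp : ∀ a, 0 ≤ p a) (f : α → β) (a : α) :
    p a ≤ pmap f p (f a) := by
  have h1 := pmap_le_comp hp id f a
  have h2 : pmap id p (id a) = p a := pmap_apply_inj Function.injective_id p a
  exact le_trans (le_of_eq h2.symm) h1

lemma ent_pmap_inj [Fintype β] {f : α → β} (hf : Function.Injective f) (p : α → ℝ) :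
    ent (pmap f p) = ent p := by
  unfold ent
  congr 1
  rw [← Finset.sum_subset (Finset.subset_univ (Finset.univ.image f))]
  · rw [Finset.sum_image (fun a _ a' _ h => hf h)]
    refine Finset.sum_congr rfl fun a _ => ?_
    rw [pmap_apply_inj hf]
  · intro b _ hb
    have : pmap f p b = 0 := by
      refine Finset.sum_eq_zero fun a _ => ?_
      have : f a ≠ b := fun h => hb (Finset.mem_image.2 ⟨a, Finset.mem_univ a, h⟩)
      simp [this]
    simp [this]

lemma Hof_comp_inj [Fintype β] [Fintype γ] (p : α → ℝ) (f : α → β) {e : β → γ}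
    (he : Function.Injective e) : Hof p (fun a => e (f a)) = Hof p f := by
  unfold Hof
  rw [pmap_comp, ent_pmap_inj he]

lemma Hof_eq_of_inj_comp [Fintype β] [Fintype γ] (p : α → ℝ) {f : α → β} {g : α → γ}
    {e : β → γ} (he : Function.Injective e) (hfg : ∀ a, g a = e (f a)) :
    Hof p g = Hof p f := by
  rw [show g = fun a => e (f a) from funext hfg]
  exact Hof_comp_inj p f he

lemma ent_comp_equiv {β' : Type*} [Fintype β] [Fintype β'] (e : β' ≃ β) (r : β → ℝ) :
    ent (fun b' => r (e b')) = ent r := by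
  unfold ent
  congr 1
  exact Equiv.sum_comp e (fun b => r b * Real.log (r b))

lemma Hof_precomp {α' : Type*} [Fintype α'] [Fintype β] (E : α' ≃ α) (q : α → ℝ) (h : α → β) :
    Hof (fun a' => q (E a')) (fun a' => h (E a')) = Hof q h := by
  unfold Hof
  rw [pmap_precomp]

/-- Chain rule for entropy of a "weight times kernel" distribution. -/
lemma ent_mul_prod {B Y : Type*} [Fintype B] [Fintype Y] (w : B → ℝ) (ν : B → Y → ℝ)
    (h1 : ∀ b, w b ≠ 0 → ∑ y, ν b y = 1) :
    ent (fun z : B × Y => w z.1 * ν z.1 z.2) = ent w + ∑ b, w b * ent (ν b) := by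
  unfold ent
  rw [Fintype.sum_prod_type]
  have key : ∀ b, ∑ y, (w b * ν b y) * Real.log (w b * ν b y)
      = w b * Real.log (w b) + w b * ∑ y, ν b y * Real.log (ν b y) := by
    intro b
    by_cases hw : w b = 0
    · simp [hw]
    · have hpt : ∀ y, (w b * ν b y) * Real.log (w b * ν b y)
          = (ν b y * (w b * Real.log (w b))) + w b * (ν b y * Real.log (ν b y)) := by
        intro y
        by_cases hν : ν b y = 0
        · simp [hν]
        · rw [Real.log_mul hw hν]; ring
      rw [Finset.sum_congr rfl fun y _ => hpt y, Finset.sum_add_distrib,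
        ← Finset.sum_mul, h1 b hw, ← Finset.mul_sum]
      ring
  rw [Finset.sum_congr rfl fun b _ => key b, Finset.sum_add_distrib]
  have : ∑ b, w b * (-∑ y, ν b y * Real.log (ν b y))
      = -∑ b, w b * ∑ y, ν b y * Real.log (ν b y) := by
    rw [← Finset.sum_neg_distrib]
    exact Finset.sum_congr rfl fun b _ => by ring
  rw [this]
  ring

/-- Transport of conditional independence along equivalences of sample space and value spaces. -/
lemma pmap_map_point {α' β' : Type*} [Fintype α'] (E : α' ≃ α) (eb : β ≃ β') (q : α → ℝ)
    (f : α → β) (f' : α' → β') (hf : ∀ a, f' a = eb (f (E a))) (b : β') :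
    pmap f' (fun a => q (E a)) b = pmap f q (eb.symm b) := by
  unfold pmap
  rw [← Equiv.sum_comp E (fun a => if f a = eb.symm b then q a else 0)]
  refine Finset.sum_congr rfl fun a _ => ?_
  rw [hf]
  congr 1
  simp [Equiv.apply_eq_iff_eq_symm_apply]

lemma condIndep_of_map {α' β' γ' σ' : Type*} [Fintype α']
    (q : α → ℝ) {f : α → β} {g : α → γ} {m : α → σ}
    (h : CondIndep q f g m) (E : α' ≃ α) (eb : β ≃ β') (ec : γ ≃ γ') (es : σ ≃ σ')
    {f' : α' → β'} {g' : α' → γ'} {m' : α' → σ'} {q' : α' → ℝ}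
    (hq : ∀ a, q' a = q (E a))
    (hf : ∀ a, f' a = eb (f (E a))) (hg : ∀ a, g' a = ec (g (E a)))
    (hm : ∀ a, m' a = es (m (E a))) :
    CondIndep q' f' g' m' := by
  have hq' : q' = fun a => q (E a) := funext hq
  subst hq'
  intro b c s
  rw [pmap_map_point E (Equiv.prodCongr eb (Equiv.prodCongr ec es)) q
      (fun a => (f a, g a, m a)) _ (fun a => by simp [hf a, hg a, hm a]) (b, c, s)]
  rw [pmap_map_point E es q m m' hm s]
  rw [pmap_map_point E (Equiv.prodCongr eb es) q (fun a => (f a, m a)) _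
      (fun a => by simp [hf a, hm a]) (b, s)]
  rw [pmap_map_point E (Equiv.prodCongr ec es) q (fun a => (g a, m a)) _
      (fun a => by simp [hg a, hm a]) (c, s)]
  simpa using h (eb.symm b) (ec.symm c) (es.symm s)

end Infra
section Decomp

variable {𝒰 : Fin K → Type} [∀ k, Fintype (𝒰 k)]

/-- Restriction between nested index sets. -/
def restr2 {𝒯 : Fin K → Type} {A C : Finset (Fin K)} (h : A ⊆ C)
    (u : ∀ k : {k // k ∈ C}, 𝒯 k.1) : ∀ k : {k // k ∈ A}, 𝒯 k.1 :=
  fun k => u ⟨k.1, h k.2⟩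

lemma subsingleton_empty_restr {𝒯 : Fin K → Type} :
    Subsingleton (∀ k : {k // k ∈ (∅ : Finset (Fin K))}, 𝒯 k.1) :=
  ⟨fun a b => funext fun k => absurd k.2 (Finset.notMem_empty _)⟩

lemma restr2_pair_inj {𝒯 : Fin K → Type} {A B C : Finset (Fin K)} (h1 : A ⊆ C) (h2 : B ⊆ C)
    (hcov : ∀ k ∈ C, k ∈ A ∨ k ∈ B) :
    Function.Injective
      (fun u : (∀ k : {k // k ∈ C}, 𝒯 k.1) => (restr2 h1 u, restr2 h2 u)) := by
  intro u v huv
  simp only [Prod.mk.injEq] at huv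
  obtain ⟨e1, e2⟩ := huv
  funext k
  rcases hcov k.1 k.2 with hA | hB
  · exact congrFun e1 ⟨k.1, hA⟩
  · exact congrFun e2 ⟨k.1, hB⟩

/-- The family of joint entropies `H(X_S, U_T)`. -/
noncomputable def EE (q : ((∀ k, 𝒰 k) × (∀ k, 𝒳 k)) → ℝ) (S T : Finset (Fin K)) : ℝ :=
  Hof q (fun w => (restr S w.2, restr T w.1))

lemma Hof_restrU (q : ((∀ k, 𝒰 k) × (∀ k, 𝒳 k)) → ℝ) (D : Finset (Fin K)) :
    Hof q (fun w => restr D w.1) = EE q ∅ D := by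
  haveI : Subsingleton (∀ k : {k // k ∈ (∅ : Finset (Fin K))}, 𝒳 k.1) :=
    subsingleton_empty_restr
  have he : Function.Injective
      (fun z : ((∀ k : {k // k ∈ (∅ : Finset (Fin K))}, 𝒳 k.1) ×
        (∀ k : {k // k ∈ D}, 𝒰 k.1)) => z.2) := by
    intro z1 z2 hz
    exact Prod.ext (Subsingleton.elim _ _) hz
  exact Hof_eq_of_inj_comp q he fun a => rfl

lemma Hof_restrUU (q : ((∀ k, 𝒰 k) × (∀ k, 𝒳 k)) → ℝ) {A B C : Finset (Fin K)}
    (h1 : A ⊆ C) (h2 : B ⊆ C) (hcov : ∀ k ∈ C, k ∈ A ∨ k ∈ B) :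
    Hof q (fun w => (restr A w.1, restr B w.1)) = EE q ∅ C := by
  haveI : Subsingleton (∀ k : {k // k ∈ (∅ : Finset (Fin K))}, 𝒳 k.1) :=
    subsingleton_empty_restr
  have he : Function.Injective
      (fun z : ((∀ k : {k // k ∈ (∅ : Finset (Fin K))}, 𝒳 k.1) ×
        (∀ k : {k // k ∈ C}, 𝒰 k.1)) => (restr2 h1 z.2, restr2 h2 z.2)) := by
    intro z1 z2 hz
    simp only [Prod.mk.injEq] at hz
    exact Prod.ext (Subsingleton.elim _ _) (restr2_pair_inj h1 h2 hcov (Prod.ext hz.1 hz.2))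
  exact Hof_eq_of_inj_comp q he fun a => rfl

lemma Hof_restrXUU (q : ((∀ k, 𝒰 k) × (∀ k, 𝒳 k)) → ℝ) {A B C : Finset (Fin K)}
    (h1 : A ⊆ C) (h2 : B ⊆ C) (hcov : ∀ k ∈ C, k ∈ A ∨ k ∈ B) (S : Finset (Fin K)) :
    Hof q (fun w => (restr S w.2, restr A w.1, restr B w.1)) = EE q S C := by
  have he : Function.Injective
      (fun z : ((∀ k : {k // k ∈ S}, 𝒳 k.1) × (∀ k : {k // k ∈ C}, 𝒰 k.1)) =>
        (z.1, restr2 h1 z.2, restr2 h2 z.2)) := by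
    intro z1 z2 hz
    simp only [Prod.mk.injEq] at hz
    exact Prod.ext hz.1 (restr2_pair_inj h1 h2 hcov (Prod.ext hz.2.1 hz.2.2))
  exact Hof_eq_of_inj_comp q he fun a => rfl

lemma sdiff_cov {A' Aa : Finset (Fin K)} : ∀ k ∈ Aa, k ∈ A' ∨ k ∈ Aa \ A' := by
  intro k hk
  by_cases h' : k ∈ A'
  · exact Or.inl h'
  · exact Or.inr (Finset.mem_sdiff.2 ⟨hk, h'⟩)

lemma CMI_decomp (q : ((∀ k, 𝒰 k) × (∀ k, 𝒳 k)) → ℝ) {A' Aa : Finset (Fin K)} (h : A' ⊆ Aa) :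
    CMI q (fun w => restr A' w.2) (fun w => restr A' w.1) (fun w => restr (Aa \ A') w.1)
      = EE q A' (Aa \ A') + EE q ∅ Aa - EE q A' Aa - EE q ∅ (Aa \ A') := by
  have hd : Aa \ A' ⊆ Aa := Finset.sdiff_subset
  show Hof q (fun w => (restr A' w.2, restr (Aa \ A') w.1))
      + Hof q (fun w => (restr A' w.1, restr (Aa \ A') w.1))
      - Hof q (fun w => (restr A' w.2, restr A' w.1, restr (Aa \ A') w.1))
      - Hof q (fun w => restr (Aa \ A') w.1) = _
  rw [Hof_restrUU q h hd sdiff_cov, Hof_restrXUU q h hd sdiff_cov, Hof_restrU]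
  rfl

lemma MI_decomp (q : ((∀ k, 𝒰 k) × (∀ k, 𝒳 k)) → ℝ) (Ab Bb : Finset (Fin K)) :
    MI q (fun w => restr Ab w.1) (fun w => restr Bb w.1)
      = EE q ∅ Ab + EE q ∅ Bb - EE q ∅ (Ab ∪ Bb) := by
  have h1 : Ab ⊆ Ab ∪ Bb := Finset.subset_union_left
  have h2 : Bb ⊆ Ab ∪ Bb := Finset.subset_union_right
  have hcov : ∀ k ∈ Ab ∪ Bb, k ∈ Ab ∨ k ∈ Bb := fun k hk => Finset.mem_union.1 hk
  show Hof q (fun w => restr Ab w.1) + Hof q (fun w => restr Bb w.1)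
      - Hof q (fun w => (restr Ab w.1, restr Bb w.1)) = _
  rw [Hof_restrU, Hof_restrU, Hof_restrUU q h1 h2 hcov]

/-- Transfer of the inner-bound inequalities when all joint entropies agree up to a uniform
shift on the `U`-marginals containing a fixed coordinate `k0`. -/
lemma innerIneq_transfer {𝒰1 𝒰2 : Fin K → Type} [∀ k, Fintype (𝒰1 k)] [∀ k, Fintype (𝒰2 k)]
    (q1 : ((∀ k, 𝒰1 k) × (∀ k, 𝒳 k)) → ℝ) (q2 : ((∀ k, 𝒰2 k) × (∀ k, 𝒳 k)) → ℝ)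
    (k0 : Fin K) (δ : ℝ)
    (hEE : ∀ S T, EE q2 S T = EE q1 S T + (if k0 ∈ T then δ else 0))
    (t : (Omega K → ℝ) × (Fin K → ℝ)) (h : InnerIneqM q1 t) : InnerIneqM q2 t := by
  intro AB
  obtain ⟨Aa, Ab, Ba, Bb, h1, h2, h3, h4, h5, h6, h7⟩ := h AB
  refine ⟨Aa, Ab, Ba, Bb, h1, h2, h3, h4, ?_, ?_, ?_⟩
  · intro A' hA' hne
    have := h5 A' hA' hne
    rw [CMI_decomp q1 hA'] at this
    rw [CMI_decomp q2 hA', hEE, hEE, hEE, hEE]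
    linarith
  · intro B' hB' hne
    have := h6 B' hB' hne
    rw [CMI_decomp q1 hB'] at this
    rw [CMI_decomp q2 hB', hEE, hEE, hEE, hEE]
    linarith
  · have := h7
    rw [MI_decomp q1] at this
    rw [MI_decomp q2, hEE, hEE, hEE]
    have hdisj : ¬(k0 ∈ Ab ∧ k0 ∈ Bb) := by
      rintro ⟨hab, hbb⟩
      have hA := h2 (h1 hab)
      have hB := h4 (h3 hbb)
      exact (Finset.disjoint_left.1 AB.2.2.2) hA hB
    have hun : (if k0 ∈ Ab ∪ Bb then δ else 0)
        = (if k0 ∈ Ab then δ else 0) + (if k0 ∈ Bb then δ else 0) := by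
      by_cases ha : k0 ∈ Ab <;> by_cases hb : k0 ∈ Bb <;>
        simp_all [Finset.mem_union]
    linarith

lemma innerIneq_transfer_eq {𝒰1 𝒰2 : Fin K → Type} [∀ k, Fintype (𝒰1 k)] [∀ k, Fintype (𝒰2 k)]
    (q1 : ((∀ k, 𝒰1 k) × (∀ k, 𝒳 k)) → ℝ) (q2 : ((∀ k, 𝒰2 k) × (∀ k, 𝒳 k)) → ℝ)
    (hEE : ∀ S T, EE q2 S T = EE q1 S T)
    (t : (Omega K → ℝ) × (Fin K → ℝ)) (h : InnerIneqM q1 t) : InnerIneqM q2 t := by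
  intro AB
  obtain ⟨Aa, Ab, Ba, Bb, h1, h2, h3, h4, h5, h6, h7⟩ := h AB
  refine ⟨Aa, Ab, Ba, Bb, h1, h2, h3, h4, ?_, ?_, ?_⟩
  · intro A' hA' hne
    have := h5 A' hA' hne
    rw [CMI_decomp q1 hA'] at this
    rw [CMI_decomp q2 hA', hEE, hEE, hEE, hEE]
    linarith
  · intro B' hB' hne
    have := h6 B' hB' hne
    rw [CMI_decomp q1 hB'] at this
    rw [CMI_decomp q2 hB', hEE, hEE, hEE, hEE]
    linarith
  · have := h7
    rw [MI_decomp q1] at this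
    rw [MI_decomp q2, hEE, hEE, hEE]
    linarith

end Decomp
section Transport

variable {𝒰 𝒱 : Fin K → Type} [∀ k, Fintype (𝒰 k)] [∀ k, Fintype (𝒱 k)]

/-- Slotwise equivalence of auxiliary alphabets, as an equivalence of sample spaces. -/
def famEquiv (e : ∀ k, 𝒱 k ≃ 𝒰 k) :
    ((∀ k, 𝒱 k) × (∀ k, 𝒳 k)) ≃ ((∀ k, 𝒰 k) × (∀ k, 𝒳 k)) :=
  Equiv.prodCongr (Equiv.piCongrRight e) (Equiv.refl _)

lemma famEquiv_apply (e : ∀ k, 𝒱 k ≃ 𝒰 k) (w : (∀ k, 𝒱 k) × (∀ k, 𝒳 k)) :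
    famEquiv e w = (fun k => e k (w.1 k), w.2) := rfl

lemma transport_witness (e : ∀ k, 𝒱 k ≃ 𝒰 k) (p : (∀ k, 𝒳 k) → ℝ)
    (q : ((∀ k, 𝒰 k) × (∀ k, 𝒳 k)) → ℝ) (hq : InnerWitnessM p q) :
    InnerWitnessM p (fun w => q (famEquiv e w)) := by
  obtain ⟨⟨hq0, hq1⟩, hmarg, hci⟩ := hq
  refine ⟨⟨fun w => hq0 _, ?_⟩, ?_, ?_⟩
  · rw [Equiv.sum_comp (famEquiv e) q]
    exact hq1
  · have h1 := pmap_precomp (famEquiv e) q Prod.snd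
    rw [show (fun a' => Prod.snd (famEquiv e a'))
      = (Prod.snd : ((∀ k, 𝒱 k) × (∀ k, 𝒳 k)) → _) from rfl] at h1
    rw [h1, hmarg]
  · intro k
    refine condIndep_of_map q (hci k) (famEquiv e) (e k).symm
      (Equiv.prodCongr (Equiv.refl _) (Equiv.piCongrRight fun j : {j : Fin K // j ≠ k} =>
        (e j.1).symm))
      (Equiv.refl _) (fun a => rfl) (fun a => ((e k).symm_apply_apply (a.1 k)).symm)
      (fun a => ?_) (fun a => rfl)
    refine Prod.ext rfl ?_
    exact funext fun j => ((e j.1).symm_apply_apply (a.1 j.1)).symm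

lemma transport_EE (e : ∀ k, 𝒱 k ≃ 𝒰 k) (q : ((∀ k, 𝒰 k) × (∀ k, 𝒳 k)) → ℝ)
    (S T : Finset (Fin K)) :
    EE (fun w => q (famEquiv e w)) S T = EE q S T := by
  unfold EE Hof
  set eb := Equiv.prodCongr (Equiv.refl (∀ k : {k // k ∈ S}, 𝒳 k.1))
    (Equiv.piCongrRight fun kk : {k // k ∈ T} => (e kk.1).symm) with heb
  have h1 : ∀ z, pmap (fun w => (restr S w.2, restr T w.1)) (fun w => q (famEquiv e w)) z
      = pmap (fun w => (restr S w.2, restr T w.1)) q (eb.symm z) := by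
    intro z
    refine pmap_map_point (famEquiv e) eb q _ _ (fun a => ?_) z
    refine Prod.ext rfl ?_
    exact funext fun kk => ((e kk.1).symm_apply_apply (a.1 kk.1)).symm
  rw [show pmap (fun w => (restr S w.2, restr T w.1)) (fun w => q (famEquiv e w))
      = fun z => pmap (fun w => (restr S w.2, restr T w.1)) q (eb.symm z) from funext h1]
  exact ent_comp_equiv eb.symm _

lemma transport_ineq (e : ∀ k, 𝒱 k ≃ 𝒰 k) (q : ((∀ k, 𝒰 k) × (∀ k, 𝒳 k)) → ℝ)
    (t : (Omega K → ℝ) × (Fin K → ℝ)) (h : InnerIneqM q t) :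
    InnerIneqM (fun w => q (famEquiv e w)) t :=
  innerIneq_transfer_eq q _ (fun S T => transport_EE e q S T) t h

end Transport
section Step

variable {𝒰 : Fin K → Type} [∀ k, Fintype (𝒰 k)]

/-- Projection dropping the `k0`-th auxiliary coordinate. -/
def projY (k0 : Fin K) : ((∀ k, 𝒰 k) × (∀ k, 𝒳 k)) →
    ((∀ j : {j : Fin K // j ≠ k0}, 𝒰 j.1) × (∀ k, 𝒳 k)) :=
  fun w => (fun j => w.1 j.1, w.2)

variable (q : ((∀ k, 𝒰 k) × (∀ k, 𝒳 k)) → ℝ) (k0 : Fin K)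

noncomputable def mB : 𝒰 k0 → ℝ := pmap (fun w => w.1 k0) q

noncomputable def pk : 𝒳 k0 → ℝ := pmap (fun w => w.2 k0) q

noncomputable def jointB : 𝒰 k0 × 𝒳 k0 → ℝ := pmap (fun w => (w.1 k0, w.2 k0)) q

noncomputable def piB : 𝒰 k0 → 𝒳 k0 → ℝ := fun b s =>
  if mB q k0 b = 0 then pk q k0 s else jointB q k0 (b, s) / mB q k0 b

noncomputable def rho : ((∀ j : {j : Fin K // j ≠ k0}, 𝒰 j.1) × (∀ k, 𝒳 k)) → ℝ :=
  fun y => if pk q k0 (y.2 k0) = 0 then 0 else pmap (projY k0) q y / pk q k0 (y.2 k0)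

noncomputable def nu (σp : 𝒳 k0 → ℝ)
    (y : (∀ j : {j : Fin K // j ≠ k0}, 𝒰 j.1) × (∀ k, 𝒳 k)) : ℝ :=
  σp (y.2 k0) * rho q k0 y

section qfacts

variable (hq0 : ∀ a, 0 ≤ q a)

include hq0

lemma mB_nonneg (b : 𝒰 k0) : 0 ≤ mB q k0 b := pmap_nonneg hq0 _ b

lemma pk_nonneg (s : 𝒳 k0) : 0 ≤ pk q k0 s := pmap_nonneg hq0 _ s

lemma jointB_nonneg (z : 𝒰 k0 × 𝒳 k0) : 0 ≤ jointB q k0 z := pmap_nonneg hq0 _ z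

omit hq0

lemma sum_jointB_fst (b : 𝒰 k0) : ∑ s, jointB q k0 (b, s) = mB q k0 b := by
  unfold mB jointB
  rw [show (fun w : ((∀ k, 𝒰 k) × (∀ k, 𝒳 k)) => w.1 k0)
    = (fun w => Prod.fst ((fun w : ((∀ k, 𝒰 k) × (∀ k, 𝒳 k)) => (w.1 k0, w.2 k0)) w)) from rfl]
  rw [pmap_comp, pmap_fst_apply]

lemma sum_jointB_snd (s : 𝒳 k0) : ∑ b, jointB q k0 (b, s) = pk q k0 s := by
  unfold pk jointB
  rw [show (fun w : ((∀ k, 𝒰 k) × (∀ k, 𝒳 k)) => w.2 k0)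
    = (fun w => Prod.snd ((fun w : ((∀ k, 𝒰 k) × (∀ k, 𝒳 k)) => (w.1 k0, w.2 k0)) w)) from rfl]
  rw [pmap_comp, pmap_snd_apply]

include hq0

lemma jointB_le_mB (b : 𝒰 k0) (s : 𝒳 k0) : jointB q k0 (b, s) ≤ mB q k0 b := by
  rw [← sum_jointB_fst q k0 b]
  exact Finset.single_le_sum (fun s _ => jointB_nonneg q k0 hq0 (b, s)) (Finset.mem_univ s)

lemma jointB_le_pk (b : 𝒰 k0) (s : 𝒳 k0) : jointB q k0 (b, s) ≤ pk q k0 s := by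
  rw [← sum_jointB_snd q k0 s]
  exact Finset.single_le_sum (fun b _ => jointB_nonneg q k0 hq0 (b, s)) (Finset.mem_univ b)

lemma piB_nonneg (b : 𝒰 k0) (s : 𝒳 k0) : 0 ≤ piB q k0 b s := by
  unfold piB
  split
  · exact pk_nonneg q k0 hq0 s
  · exact div_nonneg (jointB_nonneg q k0 hq0 _) (mB_nonneg q k0 hq0 b)

lemma piB_vanish (b : 𝒰 k0) (s : 𝒳 k0) (hs : pk q k0 s = 0) : piB q k0 b s = 0 := by
  unfold piB
  split_ifs with h
  · exact hs
  · have h1 : jointB q k0 (b, s) = 0 :=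
      le_antisymm (hs ▸ jointB_le_pk q k0 hq0 b s) (jointB_nonneg q k0 hq0 _)
    simp [h1]

lemma mB_mul_piB (b : 𝒰 k0) (s : 𝒳 k0) : mB q k0 b * piB q k0 b s = jointB q k0 (b, s) := by
  unfold piB
  split_ifs with h
  · have h1 : jointB q k0 (b, s) = 0 :=
      le_antisymm (h ▸ jointB_le_mB q k0 hq0 b s) (jointB_nonneg q k0 hq0 _)
    simp [h, h1]
  · field_simp

lemma sum_piB (b : 𝒰 k0) (hq1 : ∑ s, pk q k0 s = 1) : ∑ s, piB q k0 b s = 1 := by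
  unfold piB
  split_ifs with h
  · exact hq1
  · rw [← Finset.sum_div, sum_jointB_fst]
    field_simp

lemma marg_piB (s : 𝒳 k0) : ∑ b, mB q k0 b * piB q k0 b s = pk q k0 s := by
  rw [Finset.sum_congr rfl fun b _ => mB_mul_piB q k0 hq0 b s]
  exact sum_jointB_snd q k0 s

lemma pmapY_le (y : (∀ j : {j : Fin K // j ≠ k0}, 𝒰 j.1) × (∀ k, 𝒳 k)) :
    pmap (projY k0) q y ≤ pk q k0 (y.2 k0) := by
  have h := pmap_le_comp hq0 (projY k0) (fun y => y.2 k0) y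
  rw [show (fun w => (fun y : ((∀ j : {j : Fin K // j ≠ k0}, 𝒰 j.1) × (∀ k, 𝒳 k)) => y.2 k0)
    ((projY k0) w)) = (fun w : ((∀ k, 𝒰 k) × (∀ k, 𝒳 k)) => w.2 k0) from rfl] at h
  exact h

lemma rho_nonneg (y : (∀ j : {j : Fin K // j ≠ k0}, 𝒰 j.1) × (∀ k, 𝒳 k)) : 0 ≤ rho q k0 y := by
  unfold rho
  split_ifs with h
  · exact le_refl 0
  · exact div_nonneg (pmap_nonneg hq0 _ y) (pk_nonneg q k0 hq0 _)

lemma pmapY_eq (y : (∀ j : {j : Fin K // j ≠ k0}, 𝒰 j.1) × (∀ k, 𝒳 k)) :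
    pmap (projY k0) q y = pk q k0 (y.2 k0) * rho q k0 y := by
  unfold rho
  split_ifs with h
  · rw [h, zero_mul]
    exact le_antisymm (h ▸ pmapY_le q k0 hq0 y) (pmap_nonneg hq0 _ y)
  · field_simp

omit hq0

lemma sum_pmapY_fiber (s : 𝒳 k0) :
    ∑ y, (if y.2 k0 = s then pmap (projY k0) q y else 0) = pk q k0 s := by
  have h : pk q k0 s = pmap (fun y : ((∀ j : {j : Fin K // j ≠ k0}, 𝒰 j.1) × (∀ k, 𝒳 k)) =>
      y.2 k0) (pmap (projY k0) q) s := by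
    unfold pk
    rw [← pmap_comp]
    rfl
  rw [h]
  rfl

include hq0

lemma sum_rho_fiber (s : 𝒳 k0) :
    ∑ y, (if y.2 k0 = s then rho q k0 y else 0) = if pk q k0 s = 0 then 0 else 1 := by
  split_ifs with h
  · refine Finset.sum_eq_zero fun y _ => ?_
    split_ifs with h2
    · unfold rho
      rw [h2, h, if_pos rfl]
    · rfl
  · have h1 : ∀ y, (if y.2 k0 = s then rho q k0 y else 0)
        = (if y.2 k0 = s then pmap (projY k0) q y else 0) / pk q k0 s := by
      intro y
      split_ifs with h2
      · unfold rho
        rw [h2, if_neg h]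
      · simp
    rw [Finset.sum_congr rfl fun y _ => h1 y, ← Finset.sum_div, sum_pmapY_fiber]
    field_simp

lemma sum_nu (σp : 𝒳 k0 → ℝ) (h1 : ∑ s, σp s = 1) (h2 : ∀ s, pk q k0 s = 0 → σp s = 0) :
    ∑ y, nu q k0 σp y = 1 := by
  unfold nu
  have key : ∀ y : ((∀ j : {j : Fin K // j ≠ k0}, 𝒰 j.1) × (∀ k, 𝒳 k)),
      σp (y.2 k0) * rho q k0 y = ∑ s, (if y.2 k0 = s then σp s * rho q k0 y else 0) := by
    intro y
    simp
  rw [Finset.sum_congr rfl fun y _ => key y, Finset.sum_comm]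
  have inner : ∀ s, ∑ y, (if y.2 k0 = s then σp s * rho q k0 y else 0)
      = σp s * ∑ y, (if y.2 k0 = s then rho q k0 y else 0) := by
    intro s
    rw [Finset.mul_sum]
    refine Finset.sum_congr rfl fun y _ => ?_
    split <;> simp
  rw [Finset.sum_congr rfl fun s _ => inner s]
  have inner2 : ∀ s, σp s * (∑ y, (if y.2 k0 = s then rho q k0 y else 0)) = σp s := by
    intro s
    rw [sum_rho_fiber q k0 hq0 s]
    by_cases hs : pk q k0 s = 0
    · simp [hs, h2 s hs]
    · simp [hs]
  rw [Finset.sum_congr rfl fun s _ => inner2 s, h1]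

end qfacts

end Step
section StepB

variable {𝒰 : Fin K → Type} [∀ k, Fintype (𝒰 k)]

/-- The map appearing in the conditional independence requirement at coordinate `k`. -/
def tripleCI (k : Fin K) : ((∀ k, 𝒰 k) × (∀ k, 𝒳 k)) →
    (𝒰 k × ((∀ j : {j : Fin K // j ≠ k}, 𝒳 j.1) × (∀ j : {j : Fin K // j ≠ k}, 𝒰 j.1)) × 𝒳 k) :=
  fun w => (w.1 k, ((fun j => w.2 j.1, fun j => w.1 j.1)), w.2 k)

lemma tripleCI_inj (k : Fin K) : Function.Injective (tripleCI (𝒳 := 𝒳) (𝒰 := 𝒰) k) := by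
  intro w1 w2 h
  simp only [tripleCI, Prod.mk.injEq] at h
  obtain ⟨h1, ⟨hx, hu⟩, h2⟩ := h
  refine Prod.ext (funext fun j => ?_) (funext fun j => ?_)
  · by_cases hj : j = k
    · subst hj; exact h1
    · exact congrFun hu ⟨j, hj⟩
  · by_cases hj : j = k
    · subst hj; exact h2
    · exact congrFun hx ⟨j, hj⟩

/-- Reshuffling of the `Y`-space matching the pair `(g, m)` in the conditional independence
statement at `k0`. -/
def eY (k0 : Fin K) : ((∀ j : {j : Fin K // j ≠ k0}, 𝒰 j.1) × (∀ k, 𝒳 k)) ≃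
    (((∀ j : {j : Fin K // j ≠ k0}, 𝒳 j.1) × (∀ j : {j : Fin K // j ≠ k0}, 𝒰 j.1)) × 𝒳 k0) :=
  (Equiv.prodCongr (Equiv.refl _) (Equiv.piSplitAt k0 𝒳)).trans
    { toFun := fun z => ((z.2.2, z.1), z.2.1)
      invFun := fun z => (z.1.2, (z.2, z.1.1))
      left_inv := fun _ => rfl
      right_inv := fun _ => rfl }

variable (q : ((∀ k, 𝒰 k) × (∀ k, 𝒳 k)) → ℝ) (k0 : Fin K)

lemma pmap_midPair (z : (∀ j : {j : Fin K // j ≠ k0}, 𝒰 j.1) × (∀ k, 𝒳 k)) :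
    pmap (fun w : ((∀ k, 𝒰 k) × (∀ k, 𝒳 k)) =>
        (((fun j : {j : Fin K // j ≠ k0} => w.2 j.1, fun j : {j : Fin K // j ≠ k0} => w.1 j.1)),
          w.2 k0)) q (eY (𝒰 := 𝒰) k0 z)
      = pmap (projY k0) q z := by
  have h1 : pmap (fun w : ((∀ k, 𝒰 k) × (∀ k, 𝒳 k)) => (eY (𝒰 := 𝒰) k0) (projY k0 w)) q
      (eY (𝒰 := 𝒰) k0 z) = pmap (projY k0) q z := by
    rw [pmap_comp, pmap_equiv_apply]
    simp
  exact h1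

lemma pmap_eq_sum_pair {α C : Type*} [Fintype α] [Fintype C] {β : Type*} [Fintype β] (f : α → β) (g : α → C)
    (P : α → ℝ) (z : β) :
    pmap f P z = ∑ c, pmap (fun a => (f a, g a)) P (z, c) :=
  calc pmap f P z = pmap (fun a => Prod.fst ((fun a => (f a, g a)) a)) P z := rfl
    _ = pmap Prod.fst (pmap (fun a => (f a, g a)) P) z := by rw [pmap_comp]
    _ = ∑ c, pmap (fun a => (f a, g a)) P (z, c) := pmap_fst_apply _ z

/-- Reconstruction of a full configuration from a `Y`-configuration and a value at `k0`. -/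
def buildW (b0 : 𝒰 k0) (y : (∀ j : {j : Fin K // j ≠ k0}, 𝒰 j.1) × (∀ k, 𝒳 k)) :
    ((∀ k, 𝒰 k) × (∀ k, 𝒳 k)) :=
  ((Equiv.piSplitAt k0 𝒰).symm (b0, y.1), y.2)

lemma buildW_k0 (b0 : 𝒰 k0) (y : (∀ j : {j : Fin K // j ≠ k0}, 𝒰 j.1) × (∀ k, 𝒳 k)) :
    (buildW k0 b0 y).1 k0 = b0 := by
  simp [buildW]

lemma buildW_ne (b0 : 𝒰 k0) (y : (∀ j : {j : Fin K // j ≠ k0}, 𝒰 j.1) × (∀ k, 𝒳 k))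
    (j : {j : Fin K // j ≠ k0}) :
    (buildW k0 b0 y).1 j.1 = y.1 j := by
  simp [buildW, j.2]

lemma projY_buildW (b0 : 𝒰 k0) (y : (∀ j : {j : Fin K // j ≠ k0}, 𝒰 j.1) × (∀ k, 𝒳 k)) :
    projY k0 (buildW k0 b0 y) = y :=
  Prod.ext (funext fun j => buildW_ne k0 b0 y j) rfl

lemma projY_pair_inj :
    Function.Injective (fun w : ((∀ k, 𝒰 k) × (∀ k, 𝒳 k)) => (projY k0 w, w.1 k0)) := by
  intro w1 w2 h
  simp only [projY, Prod.mk.injEq] at h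
  obtain ⟨⟨hu, hx⟩, h0⟩ := h
  refine Prod.ext (funext fun j => ?_) hx
  by_cases hj : j = k0
  · subst hj; exact h0
  · exact congrFun hu ⟨j, hj⟩

lemma pmapY_sum (y : (∀ j : {j : Fin K // j ≠ k0}, 𝒰 j.1) × (∀ k, 𝒳 k)) :
    pmap (projY k0) q y = ∑ b0, q (buildW k0 b0 y) := by
  rw [pmap_eq_sum_pair (projY k0) (fun w => w.1 k0) q y]
  refine Finset.sum_congr rfl fun b0 _ => ?_
  have h1 : pmap (fun w : ((∀ k, 𝒰 k) × (∀ k, 𝒳 k)) => (projY k0 w, w.1 k0)) q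
      (projY k0 (buildW k0 b0 y), (buildW k0 b0 y).1 k0) = q (buildW k0 b0 y) :=
    pmap_apply_inj (projY_pair_inj k0) q _
  rw [projY_buildW, buildW_k0] at h1
  exact h1

/-- Update the auxiliary coordinate `k`. -/
def setU (k : Fin K) (w : ((∀ k, 𝒰 k) × (∀ k, 𝒳 k))) (u : 𝒰 k) :
    ((∀ k, 𝒰 k) × (∀ k, 𝒳 k)) :=
  (Function.update w.1 k u, w.2)

lemma midk_pair_inj (k : Fin K) :
    Function.Injective (fun w : ((∀ k, 𝒰 k) × (∀ k, 𝒳 k)) =>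
      ((((fun j : {j : Fin K // j ≠ k} => w.2 j.1, fun j : {j : Fin K // j ≠ k} => w.1 j.1)),
        w.2 k), w.1 k)) := by
  intro w1 w2 h
  simp only [Prod.mk.injEq] at h
  obtain ⟨⟨⟨hx, hu⟩, h2⟩, h1⟩ := h
  refine Prod.ext (funext fun j => ?_) (funext fun j => ?_)
  · by_cases hj : j = k
    · subst hj; exact h1
    · exact congrFun hu ⟨j, hj⟩
  · by_cases hj : j = k
    · subst hj; exact h2
    · exact congrFun hx ⟨j, hj⟩

lemma pmap_midk_sum (k : Fin K) (w : ((∀ k, 𝒰 k) × (∀ k, 𝒳 k))) :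
    pmap (fun w' : ((∀ k, 𝒰 k) × (∀ k, 𝒳 k)) =>
        (((fun j : {j : Fin K // j ≠ k} => w'.2 j.1, fun j : {j : Fin K // j ≠ k} => w'.1 j.1)),
          w'.2 k)) q
      ((fun j : {j : Fin K // j ≠ k} => w.2 j.1, fun j : {j : Fin K // j ≠ k} => w.1 j.1), w.2 k)
      = ∑ u, q (setU k w u) := by
  rw [pmap_eq_sum_pair _ (fun w' => w'.1 k) q _]
  refine Finset.sum_congr rfl fun u _ => ?_
  have h1 := pmap_apply_inj (midk_pair_inj (𝒰 := 𝒰) k) q (setU k w u)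
  have h2 : ∀ j : {j : Fin K // j ≠ k}, (setU k w u).1 j.1 = w.1 j.1 := fun j => by
    simp [setU, Function.update_of_ne j.2]
  have h3 : (setU k w u).1 k = u := by simp [setU]
  simp only [setU] at h1 h3 h2 ⊢
  rw [show (fun j : {j : Fin K // j ≠ k} => (Function.update w.1 k u) j.1)
    = (fun j : {j : Fin K // j ≠ k} => w.1 j.1) from funext h2, h3] at h1
  exact h1

end StepB
section StepC

variable {𝒰 : Fin K → Type} [∀ k, Fintype (𝒰 k)]
variable (p : (∀ k, 𝒳 k) → ℝ) (q : ((∀ k, 𝒰 k) × (∀ k, 𝒳 k)) → ℝ) (k0 : Fin K)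

lemma q_factor (hq : InnerWitnessM p q) (w : (∀ k, 𝒰 k) × (∀ k, 𝒳 k)) :
    q w = mB q k0 (w.1 k0) * nu q k0 (piB q k0 (w.1 k0)) (projY k0 w) := by
  have hq0 : ∀ a, 0 ≤ q a := hq.1.1
  have hci := hq.2.2 k0 (w.1 k0)
    ((fun j : {j : Fin K // j ≠ k0} => w.2 j.1, fun j : {j : Fin K // j ≠ k0} => w.1 j.1))
    (w.2 k0)
  have hL : pmap (fun w' : ((∀ k, 𝒰 k) × (∀ k, 𝒳 k)) => (w'.1 k0,
      ((fun j : {j : Fin K // j ≠ k0} => w'.2 j.1, fun j : {j : Fin K // j ≠ k0} => w'.1 j.1),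
      w'.2 k0))) q (w.1 k0,
      ((fun j : {j : Fin K // j ≠ k0} => w.2 j.1, fun j : {j : Fin K // j ≠ k0} => w.1 j.1),
      w.2 k0)) = q w := pmap_apply_inj (tripleCI_inj k0) q w
  have hR : pmap (fun w' : ((∀ k, 𝒰 k) × (∀ k, 𝒳 k)) =>
      (((fun j : {j : Fin K // j ≠ k0} => w'.2 j.1, fun j : {j : Fin K // j ≠ k0} => w'.1 j.1)),
        w'.2 k0)) q
      ((fun j : {j : Fin K // j ≠ k0} => w.2 j.1, fun j : {j : Fin K // j ≠ k0} => w.1 j.1),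
        w.2 k0) = pmap (projY k0) q (projY k0 w) := pmap_midPair q k0 (projY k0 w)
  rw [hL, hR] at hci
  have key : q w * pk q k0 (w.2 k0)
      = jointB q k0 (w.1 k0, w.2 k0) * pmap (projY k0) q (projY k0 w) := hci
  by_cases hpk : pk q k0 (w.2 k0) = 0
  · have hw0 : q w = 0 := by
      have h1 := apply_le_pmap hq0 (fun w' : ((∀ k, 𝒰 k) × (∀ k, 𝒳 k)) => w'.2 k0) w
      have h2 : pmap (fun w' : ((∀ k, 𝒰 k) × (∀ k, 𝒳 k)) => w'.2 k0) q (w.2 k0) = 0 := hpk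
      exact le_antisymm (h2 ▸ h1) (hq0 w)
    have hrho : rho q k0 (projY k0 w) = 0 := by
      unfold rho
      rw [show ((projY k0 w).2 k0 : 𝒳 k0) = w.2 k0 from rfl, if_pos hpk]
    rw [hw0]
    unfold nu
    rw [hrho, mul_zero, mul_zero]
  · have hrho : rho q k0 (projY k0 w)
        = pmap (projY k0) q (projY k0 w) / pk q k0 (w.2 k0) := by
      unfold rho
      rw [show ((projY k0 w).2 k0 : 𝒳 k0) = w.2 k0 from rfl, if_neg hpk]
    unfold nu
    rw [show ((projY k0 w).2 k0 : 𝒳 k0) = w.2 k0 from rfl, hrho, ← mul_assoc,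
      mB_mul_piB q k0 hq0]
    field_simp
    linear_combination key

/-- Assemble a `Y`-configuration from a value at coordinate `k ≠ k0` and the rest. -/
def yBuild (k : Fin K) (hk : k ≠ k0)
    (ur' : ∀ j : {j : {j : Fin K // j ≠ k0} // j ≠ ⟨k, hk⟩}, 𝒰 j.1.1)
    (x : ∀ k', 𝒳 k') (u : 𝒰 k) : (∀ j : {j : Fin K // j ≠ k0}, 𝒰 j.1) × (∀ k', 𝒳 k') :=
  ((Equiv.piSplitAt (⟨k, hk⟩ : {j : Fin K // j ≠ k0})
    (fun j : {j : Fin K // j ≠ k0} => 𝒰 j.1)).symm (u, ur'), x)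

lemma yBuild_at_k (k : Fin K) (hk : k ≠ k0)
    (ur' : ∀ j : {j : {j : Fin K // j ≠ k0} // j ≠ ⟨k, hk⟩}, 𝒰 j.1.1)
    (x : ∀ k', 𝒳 k') (u : 𝒰 k) :
    (yBuild k0 k hk ur' x u).1 ⟨k, hk⟩ = u := by
  simp [yBuild]

lemma swap_build (k : Fin K) (hk : k ≠ k0)
    (ur' : ∀ j : {j : {j : Fin K // j ≠ k0} // j ≠ ⟨k, hk⟩}, 𝒰 j.1.1)
    (x : ∀ k', 𝒳 k') (b0 : 𝒰 k0) (b u : 𝒰 k) :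
    setU k (buildW k0 b0 (yBuild k0 k hk ur' x b)) u = buildW k0 b0 (yBuild k0 k hk ur' x u) := by
  unfold setU buildW yBuild
  refine Prod.ext ?_ rfl
  funext j
  dsimp only
  by_cases hj : j = k0
  · subst hj
    rw [Function.update_of_ne (Ne.symm hk)]
    simp
  · by_cases hj2 : j = k
    · subst hj2
      rw [Function.update_self]
      simp [hj]
    · rw [Function.update_of_ne hj2]
      have hne : (⟨j, hj⟩ : {j : Fin K // j ≠ k0}) ≠ ⟨k, hk⟩ :=
        fun h => hj2 (congrArg Subtype.val h)
      simp [hj, hne]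

lemma F4 (hq : InnerWitnessM p q) (k : Fin K) (hk : k ≠ k0)
    (ur' : ∀ j : {j : {j : Fin K // j ≠ k0} // j ≠ ⟨k, hk⟩}, 𝒰 j.1.1)
    (x : ∀ k', 𝒳 k') (b : 𝒰 k) :
    rho q k0 (yBuild k0 k hk ur' x b) * pmap (fun w : ((∀ k, 𝒰 k) × (∀ k, 𝒳 k)) => w.2 k) q (x k)
      = pmap (fun w : ((∀ k, 𝒰 k) × (∀ k, 𝒳 k)) => (w.1 k, w.2 k)) q (b, x k)
        * ∑ u, rho q k0 (yBuild k0 k hk ur' x u) := by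
  have hq0 : ∀ a, 0 ≤ q a := hq.1.1
  have hmain : pmap (projY k0) q (yBuild k0 k hk ur' x b)
        * pmap (fun w : ((∀ k, 𝒰 k) × (∀ k, 𝒳 k)) => w.2 k) q (x k)
      = pmap (fun w : ((∀ k, 𝒰 k) × (∀ k, 𝒳 k)) => (w.1 k, w.2 k)) q (b, x k)
        * ∑ u, pmap (projY k0) q (yBuild k0 k hk ur' x u) := by
    have per : ∀ b0 : 𝒰 k0,
        q (buildW k0 b0 (yBuild k0 k hk ur' x b))
          * pmap (fun w : ((∀ k, 𝒰 k) × (∀ k, 𝒳 k)) => w.2 k) q (x k)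
        = pmap (fun w : ((∀ k, 𝒰 k) × (∀ k, 𝒳 k)) => (w.1 k, w.2 k)) q (b, x k)
          * ∑ u, q (buildW k0 b0 (yBuild k0 k hk ur' x u)) := by
      intro b0
      set w := buildW k0 b0 (yBuild k0 k hk ur' x b) with hw
      have hci := hq.2.2 k (w.1 k)
        ((fun j : {j : Fin K // j ≠ k} => w.2 j.1, fun j : {j : Fin K // j ≠ k} => w.1 j.1))
        (w.2 k)
      have hL : pmap (fun w' : ((∀ k, 𝒰 k) × (∀ k, 𝒳 k)) => (w'.1 k,
          ((fun j : {j : Fin K // j ≠ k} => w'.2 j.1, fun j : {j : Fin K // j ≠ k} => w'.1 j.1),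
          w'.2 k))) q (w.1 k,
          ((fun j : {j : Fin K // j ≠ k} => w.2 j.1, fun j : {j : Fin K // j ≠ k} => w.1 j.1),
          w.2 k)) = q w := pmap_apply_inj (tripleCI_inj k) q w
      have hMid := pmap_midk_sum q k w
      rw [hL, hMid] at hci
      have hw1k : w.1 k = b := by
        rw [hw]
        have h1 := buildW_ne k0 b0 (yBuild k0 k hk ur' x b) ⟨k, hk⟩
        rw [h1]
        exact yBuild_at_k k0 k hk ur' x b
      have hw2k : w.2 k = x k := rfl
      rw [hw1k, hw2k] at hci
      rw [hci]
      congr 1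
      refine Finset.sum_congr rfl fun u _ => ?_
      rw [hw, swap_build]
    have hsum1 : pmap (projY k0) q (yBuild k0 k hk ur' x b)
        = ∑ b0, q (buildW k0 b0 (yBuild k0 k hk ur' x b)) := pmapY_sum q k0 _
    have hsum2 : ∀ u, pmap (projY k0) q (yBuild k0 k hk ur' x u)
        = ∑ b0, q (buildW k0 b0 (yBuild k0 k hk ur' x u)) := fun u => pmapY_sum q k0 _
    rw [hsum1, Finset.sum_mul, Finset.sum_congr rfl fun b0 _ => per b0, ← Finset.mul_sum]
    rw [Finset.sum_congr rfl fun u _ => hsum2 u, Finset.sum_comm]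
  by_cases hpk : pk q k0 (x k0) = 0
  · have hz : ∀ u : 𝒰 k, rho q k0 (yBuild k0 k hk ur' x u) = 0 := by
      intro u
      unfold rho
      rw [show ((yBuild k0 k hk ur' x u).2 k0 : 𝒳 k0) = x k0 from rfl, if_pos hpk]
    rw [hz b, Finset.sum_congr rfl fun u _ => hz u]
    simp
  · have hv : ∀ u : 𝒰 k, rho q k0 (yBuild k0 k hk ur' x u)
        = pmap (projY k0) q (yBuild k0 k hk ur' x u) / pk q k0 (x k0) := by
      intro u
      unfold rho
      rw [show ((yBuild k0 k hk ur' x u).2 k0 : 𝒳 k0) = x k0 from rfl, if_neg hpk]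
    rw [hv b, Finset.sum_congr rfl fun u _ => hv u, ← Finset.sum_div]
    field_simp
    linear_combination hmain

end StepC
section StepD

variable {𝒰 : Fin K → Type} [∀ k, Fintype (𝒰 k)]
variable (k0 : Fin K) (B : Type) [Fintype B]

/-- The family with the `k0`-th alphabet replaced by `B`. -/
def UB : Fin K → Type := fun k => if k = k0 then B else 𝒰 k

noncomputable instance UBfin : ∀ k, Fintype (UB (𝒰 := 𝒰) k0 B k) := fun k => by
  unfold UB
  by_cases h : k = k0
  · rw [if_pos h]; infer_instance
  · rw [if_neg h]; infer_instance

def eUB0 : UB (𝒰 := 𝒰) k0 B k0 ≃ B := Equiv.cast (if_pos rfl)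

def eUBj (j : Fin K) (h : j ≠ k0) : UB (𝒰 := 𝒰) k0 B j ≃ 𝒰 j := Equiv.cast (if_neg h)

/-- The sample space over the replaced family, reshuffled. -/
noncomputable def PhiB : ((∀ k, UB (𝒰 := 𝒰) k0 B k) × (∀ k, 𝒳 k)) ≃
    (B × ((∀ j : {j : Fin K // j ≠ k0}, 𝒰 j.1) × (∀ k, 𝒳 k))) :=
  (Equiv.prodCongr ((Equiv.piSplitAt k0 (UB (𝒰 := 𝒰) k0 B)).trans
      (Equiv.prodCongr (eUB0 k0 B) (Equiv.piCongrRight fun j => eUBj k0 B j.1 j.2)))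
    (Equiv.refl _)).trans (Equiv.prodAssoc _ _ _)

variable (q : ((∀ k, 𝒰 k) × (∀ k, 𝒳 k)) → ℝ) (ω : B → ℝ) (σl : B → 𝒳 k0 → ℝ)

/-- The new joint measure in product form, on the reshuffled space. -/
noncomputable def rB : (B × ((∀ j : {j : Fin K // j ≠ k0}, 𝒰 j.1) × (∀ k, 𝒳 k))) → ℝ :=
  fun z => ω z.1 * nu q k0 (σl z.1) z.2

/-- The new joint measure on the replaced family. -/
noncomputable def qB : ((∀ k, UB (𝒰 := 𝒰) k0 B k) × (∀ k, 𝒳 k)) → ℝ :=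
  fun w => rB k0 B q ω σl (PhiB k0 B w)

section Dfacts

variable (hq0 : ∀ a, 0 ≤ q a)
variable (hω0 : ∀ b, 0 ≤ ω b) (hω1 : ∑ b, ω b = 1)
variable (hσ0 : ∀ b s, 0 ≤ σl b s) (hσ1 : ∀ b, ∑ s, σl b s = 1)
variable (hσv : ∀ b s, pk q k0 s = 0 → σl b s = 0)
variable (hmarg : ∀ s, ∑ b, ω b * σl b s = pk q k0 s)

include hq0 hσ0 hω0 in
lemma rB_nonneg : ∀ z, 0 ≤ rB k0 B q ω σl z := by
  intro z
  unfold rB nu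
  exact mul_nonneg (hω0 _) (mul_nonneg (hσ0 _ _) (rho_nonneg q k0 hq0 _))

include hq0 hω1 hσ1 hσv in
lemma sum_rB : ∑ z, rB k0 B q ω σl z = 1 := by
  unfold rB
  rw [Fintype.sum_prod_type]
  have h1 : ∀ b, ∑ y, ω b * nu q k0 (σl b) y = ω b := by
    intro b
    rw [← Finset.mul_sum, sum_nu q k0 hq0 (σl b) (hσ1 b) (hσv b), mul_one]
  rw [Finset.sum_congr rfl fun b _ => h1 b, hω1]

include hq0 hmarg in
lemma marg_rB : pmap Prod.snd (rB k0 B q ω σl) = pmap (projY k0) q := by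
  funext y
  rw [pmap_snd_apply]
  unfold rB nu
  have h1 : ∑ b, ω b * (σl b (y.2 k0) * rho q k0 y)
      = (∑ b, ω b * σl b (y.2 k0)) * rho q k0 y := by
    rw [Finset.sum_mul]
    exact Finset.sum_congr rfl fun b _ => by ring
  rw [h1, hmarg, pmapY_eq q k0 hq0 y]

include hq0 hσ0 hω0 hω1 hσ1 hσv in
lemma qB_pmf : IsPMF (qB k0 B q ω σl) := by
  constructor
  · intro w
    exact rB_nonneg k0 B q ω σl hq0 hω0 hσ0 _
  · unfold qB
    rw [Equiv.sum_comp (PhiB k0 B) (rB k0 B q ω σl)]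
    exact sum_rB k0 B q ω σl hq0 hω1 hσ1 hσv

include hq0 hmarg in
lemma qB_marg (p : (∀ k, 𝒳 k) → ℝ) (hqm : pmap Prod.snd q = p) :
    pmap Prod.snd (qB k0 B q ω σl) = p := by
  have h0 : pmap Prod.snd (qB k0 B q ω σl)
      = pmap (fun z : (B × ((∀ j : {j : Fin K // j ≠ k0}, 𝒰 j.1) × (∀ k, 𝒳 k))) => z.2.2)
        (rB k0 B q ω σl) := by
    unfold qB
    exact pmap_precomp (PhiB k0 B) (rB k0 B q ω σl)
      (fun z : (B × ((∀ j : {j : Fin K // j ≠ k0}, 𝒰 j.1) × (∀ k, 𝒳 k))) => z.2.2)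
  rw [h0]
  have h1 : pmap (fun z : (B × ((∀ j : {j : Fin K // j ≠ k0}, 𝒰 j.1) × (∀ k, 𝒳 k))) => z.2.2)
      (rB k0 B q ω σl)
      = pmap (fun y : ((∀ j : {j : Fin K // j ≠ k0}, 𝒰 j.1) × (∀ k, 𝒳 k)) => y.2)
        (pmap Prod.snd (rB k0 B q ω σl)) := by
    rw [← pmap_comp]
  rw [h1, marg_rB k0 B q ω σl hq0 hmarg, ← pmap_comp]
  rw [show (fun w : ((∀ k, 𝒰 k) × (∀ k, 𝒳 k)) => (projY k0 w).2) = (Prod.snd : _) from rfl]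
  exact hqm

end Dfacts

end StepD
section StepD2

variable {𝒰 : Fin K → Type} [∀ k, Fintype (𝒰 k)]
variable (q : ((∀ k, 𝒰 k) × (∀ k, 𝒳 k)) → ℝ) (k0 : Fin K)

lemma pk_eq_Ymarg (s : 𝒳 k0) :
    pmap (fun y : ((∀ j : {j : Fin K // j ≠ k0}, 𝒰 j.1) × (∀ k, 𝒳 k)) => y.2 k0)
      (pmap (projY k0) q) s = pk q k0 s := by
  rw [← pmap_comp]
  rfl

lemma eY_symm_snd (z : ((∀ j : {j : Fin K // j ≠ k0}, 𝒳 j.1) ×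
    (∀ j : {j : Fin K // j ≠ k0}, 𝒰 j.1)) × 𝒳 k0) :
    ((eY (𝒰 := 𝒰) k0).symm z).2 k0 = z.2 := by
  simp [eY, Equiv.symm_trans_apply]

variable (B : Type) [Fintype B] (ω : B → ℝ) (σl : B → 𝒳 k0 → ℝ)

lemma pmap_fstpair_rB (hq0 : ∀ a, 0 ≤ q a) (hσv : ∀ b s, pk q k0 s = 0 → σl b s = 0)
    (b : B) (s : 𝒳 k0) :
    pmap (fun z : (B × ((∀ j : {j : Fin K // j ≠ k0}, 𝒰 j.1) × (∀ k, 𝒳 k))) =>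
      (z.1, z.2.2 k0)) (rB k0 B q ω σl) (b, s) = ω b * σl b s := by
  unfold pmap
  rw [Fintype.sum_prod_type]
  simp only [Prod.mk.injEq, ite_and]
  have hsw : ∀ b', (∑ y, if b' = b then if y.2 k0 = s then rB k0 B q ω σl (b', y) else 0 else 0)
      = if b' = b then (∑ y, if y.2 k0 = s then rB k0 B q ω σl (b', y) else 0) else 0 := by
    intro b'
    split <;> simp
  rw [Finset.sum_congr rfl fun b' _ => hsw b']
  rw [Finset.sum_ite_eq' Finset.univ b
    (fun b' => ∑ y, if y.2 k0 = s then rB k0 B q ω σl (b', y) else 0), if_pos (Finset.mem_univ b)]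
  have h1 : ∀ y : ((∀ j : {j : Fin K // j ≠ k0}, 𝒰 j.1) × (∀ k, 𝒳 k)),
      (if y.2 k0 = s then rB k0 B q ω σl (b, y) else 0)
      = ω b * σl b s * (if y.2 k0 = s then rho q k0 y else 0) := by
    intro y
    by_cases h : y.2 k0 = s
    · rw [if_pos h, if_pos h]
      unfold rB nu
      rw [h]
      ring
    · rw [if_neg h, if_neg h, mul_zero]
  rw [Finset.sum_congr rfl fun y _ => h1 y, ← Finset.mul_sum, sum_rho_fiber q k0 hq0 s]
  by_cases hs : pk q k0 s = 0
  · rw [if_pos hs, hσv b s hs]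
    ring
  · rw [if_neg hs, mul_one]

lemma R3 (hq0 : ∀ a, 0 ≤ q a) (hσv : ∀ b s, pk q k0 s = 0 → σl b s = 0)
    (hmarg : ∀ s, ∑ b, ω b * σl b s = pk q k0 s) :
    CondIndep (rB k0 B q ω σl)
      (fun z => z.1)
      (fun z => ((fun j : {j : Fin K // j ≠ k0} => z.2.2 j.1),
        fun j : {j : Fin K // j ≠ k0} => z.2.1 j))
      (fun z => z.2.2 k0) := by
  intro b c s
  have h1 : pmap (fun z : (B × ((∀ j : {j : Fin K // j ≠ k0}, 𝒰 j.1) × (∀ k, 𝒳 k))) =>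
      (z.1, ((fun j : {j : Fin K // j ≠ k0} => z.2.2 j.1,
        fun j : {j : Fin K // j ≠ k0} => z.2.1 j), z.2.2 k0)))
      (rB k0 B q ω σl) (b, c, s)
      = rB k0 B q ω σl (b, (eY (𝒰 := 𝒰) k0).symm (c, s)) :=
    pmap_equiv_apply (Equiv.prodCongr (Equiv.refl B) (eY (𝒰 := 𝒰) k0)) (rB k0 B q ω σl) (b, c, s)
  have h2 : pmap (fun z : (B × ((∀ j : {j : Fin K // j ≠ k0}, 𝒰 j.1) × (∀ k, 𝒳 k))) =>
      z.2.2 k0) (rB k0 B q ω σl) s = pk q k0 s := by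
    have hc : pmap (fun z : (B × ((∀ j : {j : Fin K // j ≠ k0}, 𝒰 j.1) × (∀ k, 𝒳 k))) =>
        z.2.2 k0) (rB k0 B q ω σl)
        = pmap (fun y : ((∀ j : {j : Fin K // j ≠ k0}, 𝒰 j.1) × (∀ k, 𝒳 k)) => y.2 k0)
          (pmap Prod.snd (rB k0 B q ω σl)) :=
      pmap_comp Prod.snd (fun y : ((∀ j : {j : Fin K // j ≠ k0}, 𝒰 j.1) × (∀ k, 𝒳 k)) => y.2 k0)
        (rB k0 B q ω σl)
    rw [hc, marg_rB k0 B q ω σl hq0 hmarg]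
    exact pk_eq_Ymarg q k0 s
  have h4 : pmap (fun z : (B × ((∀ j : {j : Fin K // j ≠ k0}, 𝒰 j.1) × (∀ k, 𝒳 k))) =>
      (((fun j : {j : Fin K // j ≠ k0} => z.2.2 j.1,
        fun j : {j : Fin K // j ≠ k0} => z.2.1 j)), z.2.2 k0))
      (rB k0 B q ω σl) (c, s) = pmap (projY k0) q ((eY (𝒰 := 𝒰) k0).symm (c, s)) := by
    have hc : pmap (fun z : (B × ((∀ j : {j : Fin K // j ≠ k0}, 𝒰 j.1) × (∀ k, 𝒳 k))) =>
        (((fun j : {j : Fin K // j ≠ k0} => z.2.2 j.1,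
          fun j : {j : Fin K // j ≠ k0} => z.2.1 j)), z.2.2 k0)) (rB k0 B q ω σl)
        = pmap (⇑(eY (𝒰 := 𝒰) k0)) (pmap Prod.snd (rB k0 B q ω σl)) :=
      pmap_comp Prod.snd (⇑(eY (𝒰 := 𝒰) k0)) (rB k0 B q ω σl)
    rw [hc, marg_rB k0 B q ω σl hq0 hmarg, pmap_equiv_apply]
  rw [h1, h2, h4, pmap_fstpair_rB q k0 B ω σl hq0 hσv b s]
  unfold rB nu
  rw [pmapY_eq q k0 hq0, eY_symm_snd]
  ring

lemma qB_ci_k0 (hq0 : ∀ a, 0 ≤ q a) (hσv : ∀ b s, pk q k0 s = 0 → σl b s = 0)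
    (hmarg : ∀ s, ∑ b, ω b * σl b s = pk q k0 s) :
    CondIndep (qB k0 B q ω σl) (fun w => w.1 k0)
      (fun w => (fun j : {j : Fin K // j ≠ k0} => w.2 j.1,
        fun j : {j : Fin K // j ≠ k0} => w.1 j.1))
      (fun w => w.2 k0) := by
  refine condIndep_of_map (rB k0 B q ω σl) (R3 q k0 B ω σl hq0 hσv hmarg) (PhiB k0 B)
    (eUB0 (𝒰 := 𝒰) k0 B).symm
    (Equiv.prodCongr (Equiv.refl _)
      (Equiv.piCongrRight fun j : {j : Fin K // j ≠ k0} => (eUBj k0 B j.1 j.2).symm))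
    (Equiv.refl _)
    (fun a => rfl) (fun a => ((eUB0 (𝒰 := 𝒰) k0 B).symm_apply_apply (a.1 k0)).symm)
    (fun a => ?_) (fun a => rfl)
  refine Prod.ext rfl ?_
  exact funext fun j => ((eUBj k0 B j.1 j.2).symm_apply_apply (a.1 j.1)).symm

end StepD2
section StepD3

variable {𝒰 : Fin K → Type} [∀ k, Fintype (𝒰 k)]
variable (k0 : Fin K) (B : Type) [Fintype B]

/-- Assembling the updated auxiliary family from a `B`-value and the remaining coordinates. -/
def psiK (k : Fin K) (hk : k ≠ k0) :
    (B × (∀ j : {j : {j : Fin K // j ≠ k0} // j ≠ ⟨k, hk⟩}, 𝒰 j.1.1)) ≃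
      (∀ j : {j : Fin K // j ≠ k}, UB (𝒰 := 𝒰) k0 B j.1) where
  toFun z j :=
    if h : j.1 = k0 then (Equiv.cast (show B = UB (𝒰 := 𝒰) k0 B j.1 from (if_pos h).symm)) z.1
    else (eUBj (𝒰 := 𝒰) k0 B j.1 h).symm
      (z.2 ⟨⟨j.1, h⟩, fun hh => j.2 (congrArg Subtype.val hh)⟩)
  invFun f := ((eUB0 (𝒰 := 𝒰) k0 B) (f ⟨k0, Ne.symm hk⟩),
    fun j => (eUBj (𝒰 := 𝒰) k0 B j.1.1 j.1.2) (f ⟨j.1.1, fun hh => j.2 (Subtype.ext hh)⟩))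
  left_inv := by
    intro z
    refine Prod.ext ?_ ?_
    · show (eUB0 (𝒰 := 𝒰) k0 B) (dite _ _ _) = z.1
      rw [dif_pos rfl]
      simp [eUB0]
      exact (cast_cast _ _ _).trans (cast_eq _ _)
    · funext j
      show (eUBj (𝒰 := 𝒰) k0 B j.1.1 j.1.2) (dite _ _ _) = z.2 j
      rw [dif_neg j.1.2]
      simp only [eUBj, Equiv.cast_apply, Equiv.cast_symm, cast_cast, cast_eq]
      exact (cast_cast _ _ _).trans (cast_eq _ _)
  right_inv := by
    intro f
    funext j
    show dite _ _ _ = f j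
    by_cases h : j.1 = k0
    · rw [dif_pos h]
      obtain ⟨j1, hj1⟩ := j
      dsimp only at h
      subst h
      simp [eUB0]
      exact (cast_cast _ _ _).trans (cast_eq _ _)
    · rw [dif_neg h]
      simp [eUBj]

/-- Full reshuffle of `B × Y` matching the conditional independence triple at `k ≠ k0`. -/
noncomputable def Ek (k : Fin K) (hk : k ≠ k0) :
    (B × ((∀ j : {j : Fin K // j ≠ k0}, 𝒰 j.1) × (∀ k', 𝒳 k'))) ≃
      (𝒰 k × (((∀ j : {j : Fin K // j ≠ k}, 𝒳 j.1) ×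
        (B × (∀ j : {j : {j : Fin K // j ≠ k0} // j ≠ ⟨k, hk⟩}, 𝒰 j.1.1))) × 𝒳 k)) :=
  (Equiv.prodCongr (Equiv.refl B) (Equiv.prodCongr
      (Equiv.piSplitAt (⟨k, hk⟩ : {j : Fin K // j ≠ k0})
        (fun j : {j : Fin K // j ≠ k0} => 𝒰 j.1))
      (Equiv.piSplitAt k 𝒳))).trans
    { toFun := fun z => (z.2.1.1, ((z.2.2.2, (z.1, z.2.1.2)), z.2.2.1))
      invFun := fun t => (t.2.1.2.1, ((t.1, t.2.1.2.2), (t.2.2, t.2.1.1)))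
      left_inv := fun _ => rfl
      right_inv := fun _ => rfl }

lemma PhiB_fst (w : (∀ k, UB (𝒰 := 𝒰) k0 B k) × (∀ k, 𝒳 k)) :
    ((PhiB (𝒰 := 𝒰) k0 B) w).1 = eUB0 (𝒰 := 𝒰) k0 B (w.1 k0) := rfl

lemma PhiB_snd_fst (w : (∀ k, UB (𝒰 := 𝒰) k0 B k) × (∀ k, 𝒳 k)) (j : {j : Fin K // j ≠ k0}) :
    ((PhiB (𝒰 := 𝒰) k0 B) w).2.1 j = eUBj (𝒰 := 𝒰) k0 B j.1 j.2 (w.1 j.1) := rfl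

variable (q : ((∀ k, 𝒰 k) × (∀ k, 𝒳 k)) → ℝ) (ω : B → ℝ) (σl : B → 𝒳 k0 → ℝ)

lemma R4 (p : (∀ k, 𝒳 k) → ℝ) (hq : InnerWitnessM p q)
    (hmarg : ∀ s, ∑ b, ω b * σl b s = pk q k0 s) (k : Fin K) (hk : k ≠ k0) :
    CondIndep (rB k0 B q ω σl)
      (fun z => z.2.1 ⟨k, hk⟩)
      (fun z => ((fun j : {j : Fin K // j ≠ k} => z.2.2 j.1),
        (z.1, fun j : {j : {j : Fin K // j ≠ k0} // j ≠ ⟨k, hk⟩} => z.2.1 j.1)))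
      (fun z => z.2.2 k) := by
  have hq0 : ∀ a, 0 ≤ q a := hq.1.1
  intro b c s
  have h1 : pmap (fun z : (B × ((∀ j : {j : Fin K // j ≠ k0}, 𝒰 j.1) × (∀ k', 𝒳 k'))) =>
      (z.2.1 ⟨k, hk⟩, (((fun j : {j : Fin K // j ≠ k} => z.2.2 j.1),
        (z.1, fun j : {j : {j : Fin K // j ≠ k0} // j ≠ ⟨k, hk⟩} => z.2.1 j.1)), z.2.2 k)))
      (rB k0 B q ω σl) (b, c, s)
      = rB k0 B q ω σl ((Ek (𝒰 := 𝒰) k0 B k hk).symm (b, c, s)) :=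
    pmap_equiv_apply (Ek (𝒰 := 𝒰) k0 B k hk) (rB k0 B q ω σl) (b, c, s)
  have h2 : pmap (fun z : (B × ((∀ j : {j : Fin K // j ≠ k0}, 𝒰 j.1) × (∀ k', 𝒳 k'))) =>
      z.2.2 k) (rB k0 B q ω σl) s
      = pmap (fun w : ((∀ k', 𝒰 k') × (∀ k', 𝒳 k')) => w.2 k) q s := by
    have hc : pmap (fun z : (B × ((∀ j : {j : Fin K // j ≠ k0}, 𝒰 j.1) × (∀ k', 𝒳 k'))) =>
        z.2.2 k) (rB k0 B q ω σl)
        = pmap (fun y : ((∀ j : {j : Fin K // j ≠ k0}, 𝒰 j.1) × (∀ k', 𝒳 k')) => y.2 k)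
          (pmap Prod.snd (rB k0 B q ω σl)) :=
      pmap_comp Prod.snd (fun y : ((∀ j : {j : Fin K // j ≠ k0}, 𝒰 j.1) × (∀ k', 𝒳 k')) =>
        y.2 k) (rB k0 B q ω σl)
    rw [hc, marg_rB k0 B q ω σl hq0 hmarg, ← pmap_comp]
    rfl
  have h3 : pmap (fun z : (B × ((∀ j : {j : Fin K // j ≠ k0}, 𝒰 j.1) × (∀ k', 𝒳 k'))) =>
      (z.2.1 ⟨k, hk⟩, z.2.2 k)) (rB k0 B q ω σl) (b, s)
      = pmap (fun w : ((∀ k', 𝒰 k') × (∀ k', 𝒳 k')) => (w.1 k, w.2 k)) q (b, s) := by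
    have hc : pmap (fun z : (B × ((∀ j : {j : Fin K // j ≠ k0}, 𝒰 j.1) × (∀ k', 𝒳 k'))) =>
        (z.2.1 ⟨k, hk⟩, z.2.2 k)) (rB k0 B q ω σl)
        = pmap (fun y : ((∀ j : {j : Fin K // j ≠ k0}, 𝒰 j.1) × (∀ k', 𝒳 k')) =>
          (y.1 ⟨k, hk⟩, y.2 k)) (pmap Prod.snd (rB k0 B q ω σl)) :=
      pmap_comp Prod.snd (fun y : ((∀ j : {j : Fin K // j ≠ k0}, 𝒰 j.1) × (∀ k', 𝒳 k')) =>
        (y.1 ⟨k, hk⟩, y.2 k)) (rB k0 B q ω σl)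
    rw [hc, marg_rB k0 B q ω σl hq0 hmarg, ← pmap_comp]
    rfl
  have h4 : pmap (fun z : (B × ((∀ j : {j : Fin K // j ≠ k0}, 𝒰 j.1) × (∀ k', 𝒳 k'))) =>
      ((((fun j : {j : Fin K // j ≠ k} => z.2.2 j.1),
        (z.1, fun j : {j : {j : Fin K // j ≠ k0} // j ≠ ⟨k, hk⟩} => z.2.1 j.1))), z.2.2 k))
      (rB k0 B q ω σl) (c, s)
      = ∑ u, rB k0 B q ω σl ((Ek (𝒰 := 𝒰) k0 B k hk).symm (u, (c, s))) := by
    have hc : pmap (fun z : (B × ((∀ j : {j : Fin K // j ≠ k0}, 𝒰 j.1) × (∀ k', 𝒳 k'))) =>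
        ((((fun j : {j : Fin K // j ≠ k} => z.2.2 j.1),
          (z.1, fun j : {j : {j : Fin K // j ≠ k0} // j ≠ ⟨k, hk⟩} => z.2.1 j.1))), z.2.2 k))
        (rB k0 B q ω σl)
        = pmap Prod.snd (pmap (⇑(Ek (𝒰 := 𝒰) k0 B k hk)) (rB k0 B q ω σl)) :=
      pmap_comp (⇑(Ek (𝒰 := 𝒰) k0 B k hk)) Prod.snd (rB k0 B q ω σl)
    rw [hc, pmap_snd_apply]
    exact Finset.sum_congr rfl fun u _ =>
      pmap_equiv_apply (Ek (𝒰 := 𝒰) k0 B k hk) (rB k0 B q ω σl) (u, (c, s))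
  rw [h1, h2, h3, h4]
  have hz : ∀ u : 𝒰 k, (Ek (𝒰 := 𝒰) k0 B k hk).symm (u, (c, s))
      = (c.2.1, yBuild k0 k hk c.2.2 ((Equiv.piSplitAt k 𝒳).symm (s, c.1)) u) := fun u => rfl
  simp only [hz]
  set x0 := (Equiv.piSplitAt k 𝒳).symm (s, c.1) with hx0
  have hx0k : x0 k = s := by simp [hx0]
  have hF4 := F4 p q k0 hq k hk c.2.2 x0 b
  rw [hx0k] at hF4
  unfold rB nu
  have hyx : ∀ u : 𝒰 k, (yBuild (𝒰 := 𝒰) k0 k hk c.2.2 x0 u).2 = x0 := fun u => rfl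
  simp only [hyx]
  have hsum : ∑ u : 𝒰 k, ω c.2.1 * (σl c.2.1 (x0 k0)
        * rho q k0 (yBuild k0 k hk c.2.2 x0 u))
      = ω c.2.1 * σl c.2.1 (x0 k0) * ∑ u : 𝒰 k, rho q k0 (yBuild k0 k hk c.2.2 x0 u) := by
    rw [Finset.mul_sum]
    exact Finset.sum_congr rfl fun u _ => by ring
  rw [hsum]
  linear_combination (ω c.2.1 * σl c.2.1 (x0 k0)) * hF4

lemma qB_ci_k (p : (∀ k, 𝒳 k) → ℝ) (hq : InnerWitnessM p q)
    (hmarg : ∀ s, ∑ b, ω b * σl b s = pk q k0 s) (k : Fin K) (hk : k ≠ k0) :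
    CondIndep (qB k0 B q ω σl) (fun w => w.1 k)
      (fun w => (fun j : {j : Fin K // j ≠ k} => w.2 j.1,
        fun j : {j : Fin K // j ≠ k} => w.1 j.1))
      (fun w => w.2 k) := by
  refine condIndep_of_map (rB k0 B q ω σl) (R4 k0 B q ω σl p hq hmarg k hk) (PhiB k0 B)
    (eUBj (𝒰 := 𝒰) k0 B k hk).symm
    (Equiv.prodCongr (Equiv.refl _) (psiK (𝒰 := 𝒰) k0 B k hk))
    (Equiv.refl _)
    (fun a => rfl) (fun a => ((eUBj (𝒰 := 𝒰) k0 B k hk).symm_apply_apply (a.1 k)).symm)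
    (fun a => ?_) (fun a => rfl)
  refine Prod.ext rfl ?_
  funext j
  show a.1 j.1 = psiK (𝒰 := 𝒰) k0 B k hk (_, _) j
  show a.1 j.1 = dite _ _ _
  by_cases h : j.1 = k0
  · rw [dif_pos h]
    obtain ⟨j1, hj1⟩ := j
    dsimp only at h
    subst h
    rw [PhiB_fst]
    simp [eUB0, eUBj]
    exact ((cast_cast _ _ _).trans (cast_eq _ _)).symm
  · rw [dif_neg h]
    dsimp only
    rw [PhiB_snd_fst]
    simp [eUBj]

end StepD3
section StepD4

variable {𝒰 : Fin K → Type} [∀ k, Fintype (𝒰 k)]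
variable (q : ((∀ k, 𝒰 k) × (∀ k, 𝒳 k)) → ℝ) (k0 : Fin K)

/-- The conditional observation map on `Y` for index sets `S` (sources) and `T'` (auxiliaries
avoiding `k0`). -/
def GST (S T' : Finset (Fin K)) (hT' : k0 ∉ T') :
    ((∀ j : {j : Fin K // j ≠ k0}, 𝒰 j.1) × (∀ k, 𝒳 k)) →
      ((∀ k : {k // k ∈ S}, 𝒳 k.1) × (∀ k : {k // k ∈ T'}, 𝒰 k.1)) :=
  fun y => (restr S y.2, fun k => y.1 ⟨k.1, fun h => hT' (h ▸ k.2)⟩)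

/-- The conditional entropy functional used for the Carathéodory argument. -/
noncomputable def gfun (S T' : Finset (Fin K)) (hT' : k0 ∉ T') (σp : 𝒳 k0 → ℝ) : ℝ :=
  ent (pmap (GST (𝒰 := 𝒰) k0 S T' hT') (nu q k0 σp))

variable (B : Type) [Fintype B] (ω : B → ℝ) (σl : B → 𝒳 k0 → ℝ)

lemma EE_qB_notmem (hq0 : ∀ a, 0 ≤ q a) (hmarg : ∀ s, ∑ b, ω b * σl b s = pk q k0 s)
    (S T : Finset (Fin K)) (hT : k0 ∉ T) :
    EE (qB k0 B q ω σl) S T = EE q S T := by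
  unfold EE Hof
  set eb : ((∀ k : {k // k ∈ S}, 𝒳 k.1) × (∀ k : {k // k ∈ T}, 𝒰 k.1)) ≃
      ((∀ k : {k // k ∈ S}, 𝒳 k.1) × (∀ k : {k // k ∈ T}, UB (𝒰 := 𝒰) k0 B k.1)) :=
    Equiv.prodCongr (Equiv.refl (∀ k : {k // k ∈ S}, 𝒳 k.1))
    (Equiv.piCongrRight fun k : {k // k ∈ T} =>
      (eUBj (𝒰 := 𝒰) k0 B k.1 (fun h => hT (h ▸ k.2))).symm) with heb
  have h1 : ∀ z, pmap (fun w : ((∀ k, UB (𝒰 := 𝒰) k0 B k) × (∀ k, 𝒳 k)) =>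
        (restr S w.2, restr T w.1)) (qB k0 B q ω σl) z
      = pmap (fun z' : (B × ((∀ j : {j : Fin K // j ≠ k0}, 𝒰 j.1) × (∀ k, 𝒳 k))) =>
          GST (𝒰 := 𝒰) k0 S T hT z'.2) (rB k0 B q ω σl) (eb.symm z) := by
    intro z
    refine pmap_map_point (PhiB k0 B) eb (rB k0 B q ω σl) _ _ (fun a => ?_) z
    refine Prod.ext rfl ?_
    funext k
    exact ((eUBj (𝒰 := 𝒰) k0 B k.1 (fun h => hT (h ▸ k.2))).symm_apply_apply (a.1 k.1)).symm
  rw [funext h1, ent_comp_equiv eb.symm]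
  have h2 : pmap (fun z' : (B × ((∀ j : {j : Fin K // j ≠ k0}, 𝒰 j.1) × (∀ k, 𝒳 k))) =>
        GST (𝒰 := 𝒰) k0 S T hT z'.2) (rB k0 B q ω σl)
      = pmap (GST (𝒰 := 𝒰) k0 S T hT) (pmap Prod.snd (rB k0 B q ω σl)) :=
    pmap_comp Prod.snd (GST (𝒰 := 𝒰) k0 S T hT) (rB k0 B q ω σl)
  rw [h2, marg_rB k0 B q ω σl hq0 hmarg, ← pmap_comp]
  rfl

/-- Assembly map for the entropy chain rule when `k0 ∈ T`. -/
def eAssm (S T : Finset (Fin K)) :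
    (B × ((∀ k : {k // k ∈ S}, 𝒳 k.1) × (∀ k : {k // k ∈ T.erase k0}, 𝒰 k.1))) →
      ((∀ k : {k // k ∈ S}, 𝒳 k.1) × (∀ k : {k // k ∈ T}, UB (𝒰 := 𝒰) k0 B k.1)) :=
  fun z => (z.2.1, fun k =>
    if h : k.1 = k0 then (Equiv.cast (show B = UB (𝒰 := 𝒰) k0 B k.1 from (if_pos h).symm)) z.1
    else (eUBj (𝒰 := 𝒰) k0 B k.1 h).symm (z.2.2 ⟨k.1, Finset.mem_erase.2 ⟨h, k.2⟩⟩))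

lemma eAssm_inj (S T : Finset (Fin K)) (hT : k0 ∈ T) :
    Function.Injective (eAssm (𝒳 := 𝒳) (𝒰 := 𝒰) k0 B S T) := by
  intro z1 z2 h
  simp only [eAssm, Prod.mk.injEq] at h
  obtain ⟨h1, h2⟩ := h
  refine Prod.ext ?_ (Prod.ext h1 ?_)
  · have h3 := congrFun h2 ⟨k0, hT⟩
    rw [dif_pos rfl, dif_pos rfl] at h3
    exact (Equiv.cast _).injective h3
  · funext k
    have h3 := congrFun h2 ⟨k.1, Finset.mem_of_mem_erase k.2⟩
    rw [dif_neg (Finset.ne_of_mem_erase k.2), dif_neg (Finset.ne_of_mem_erase k.2)] at h3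
    exact (eUBj (𝒰 := 𝒰) k0 B k.1 (Finset.ne_of_mem_erase k.2)).symm.injective h3

lemma MB_eq_eAssm (S T : Finset (Fin K)) (w : (∀ k, UB (𝒰 := 𝒰) k0 B k) × (∀ k, 𝒳 k)) :
    ((restr S w.2, restr T w.1) :
        ((∀ k : {k // k ∈ S}, 𝒳 k.1) × (∀ k : {k // k ∈ T}, UB (𝒰 := 𝒰) k0 B k.1)))
      = eAssm (𝒰 := 𝒰) k0 B S T ((PhiB k0 B w).1,
        GST (𝒰 := 𝒰) k0 S (T.erase k0) (Finset.notMem_erase k0 T) ((PhiB k0 B w).2)) := by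
  refine Prod.ext rfl ?_
  funext k
  show restr T w.1 k = dite _ _ _
  by_cases h : k.1 = k0
  · rw [dif_pos h]
    obtain ⟨k1, hk1⟩ := k
    dsimp only at h ⊢
    subst h
    rw [PhiB_fst]
    simp [eUB0, restr]
    exact ((cast_cast _ _ _).trans (cast_eq _ _)).symm
  · rw [dif_neg h]
    show w.1 k.1 = _
    dsimp only [GST]
    rw [PhiB_snd_fst]
    simp [eUBj]

lemma pmap_kernel {B' Y' Z' : Type*} [Fintype B'] [Fintype Y'] (ωf : B' → ℝ) (νf : B' → Y' → ℝ)
    (G : Y' → Z') (b : B') (t : Z') :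
    pmap (fun z : B' × Y' => (z.1, G z.2)) (fun z => ωf z.1 * νf z.1 z.2) (b, t)
      = ωf b * pmap G (νf b) t := by
  unfold pmap
  rw [Fintype.sum_prod_type]
  simp only [Prod.mk.injEq, ite_and]
  have hsw : ∀ b', (∑ y, if b' = b then if G y = t then ωf b' * νf b' y else 0 else 0)
      = if b' = b then (∑ y, if G y = t then ωf b' * νf b' y else 0) else 0 := by
    intro b'
    split <;> simp
  rw [Finset.sum_congr rfl fun b' _ => hsw b',
    Finset.sum_ite_eq' Finset.univ b
      (fun b' => ∑ y, if G y = t then ωf b' * νf b' y else 0), if_pos (Finset.mem_univ b),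
    Finset.mul_sum]
  refine Finset.sum_congr rfl fun y _ => ?_
  split <;> simp

lemma EE_qB_mem (hq0 : ∀ a, 0 ≤ q a) (hσ1 : ∀ b, ∑ s, σl b s = 1)
    (hσv : ∀ b s, pk q k0 s = 0 → σl b s = 0)
    (S T : Finset (Fin K)) (hT : k0 ∈ T) :
    EE (qB k0 B q ω σl) S T = ent ω + ∑ b, ω b *
      gfun q k0 S (T.erase k0) (Finset.notMem_erase k0 T) (σl b) := by
  unfold EE Hof
  rw [show (fun w : ((∀ k, UB (𝒰 := 𝒰) k0 B k) × (∀ k, 𝒳 k)) => (restr S w.2, restr T w.1))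
    = fun w => eAssm (𝒰 := 𝒰) k0 B S T ((PhiB k0 B w).1,
        GST (𝒰 := 𝒰) k0 S (T.erase k0) (Finset.notMem_erase k0 T) ((PhiB k0 B w).2))
    from funext (MB_eq_eAssm k0 B S T)]
  rw [pmap_comp (fun w : ((∀ k, UB (𝒰 := 𝒰) k0 B k) × (∀ k, 𝒳 k)) => ((PhiB k0 B w).1,
      GST (𝒰 := 𝒰) k0 S (T.erase k0) (Finset.notMem_erase k0 T) ((PhiB k0 B w).2)))
    (eAssm (𝒰 := 𝒰) k0 B S T) (qB k0 B q ω σl)]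
  rw [ent_pmap_inj (eAssm_inj k0 B S T hT)]
  have h3 : pmap (fun w : ((∀ k, UB (𝒰 := 𝒰) k0 B k) × (∀ k, 𝒳 k)) => ((PhiB k0 B w).1,
      GST (𝒰 := 𝒰) k0 S (T.erase k0) (Finset.notMem_erase k0 T) ((PhiB k0 B w).2)))
      (qB k0 B q ω σl)
      = pmap (fun z : (B × ((∀ j : {j : Fin K // j ≠ k0}, 𝒰 j.1) × (∀ k, 𝒳 k))) => (z.1,
        GST (𝒰 := 𝒰) k0 S (T.erase k0) (Finset.notMem_erase k0 T) z.2)) (rB k0 B q ω σl) :=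
    pmap_precomp (PhiB k0 B) (rB k0 B q ω σl)
      (fun z : (B × ((∀ j : {j : Fin K // j ≠ k0}, 𝒰 j.1) × (∀ k, 𝒳 k))) => (z.1,
        GST (𝒰 := 𝒰) k0 S (T.erase k0) (Finset.notMem_erase k0 T) z.2))
  rw [h3]
  have h4 : pmap (fun z : (B × ((∀ j : {j : Fin K // j ≠ k0}, 𝒰 j.1) × (∀ k, 𝒳 k))) => (z.1,
        GST (𝒰 := 𝒰) k0 S (T.erase k0) (Finset.notMem_erase k0 T) z.2)) (rB k0 B q ω σl)
      = fun zt => ω zt.1 * pmap (GST (𝒰 := 𝒰) k0 S (T.erase k0) (Finset.notMem_erase k0 T))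
          (nu q k0 (σl zt.1)) zt.2 := by
    funext zt
    obtain ⟨b, t⟩ := zt
    exact pmap_kernel ω (fun b => nu q k0 (σl b)) _ b t
  rw [h4]
  exact ent_mul_prod ω (fun b => pmap (GST (𝒰 := 𝒰) k0 S (T.erase k0)
    (Finset.notMem_erase k0 T)) (nu q k0 (σl b))) (fun b _ => by
      rw [sum_pmap]
      exact sum_nu q k0 hq0 (σl b) (hσ1 b) (hσv b))

end StepD4

section StepD4b

variable {𝒰 : Fin K → Type} [∀ k, Fintype (𝒰 k)]
variable (q : ((∀ k, 𝒰 k) × (∀ k, 𝒳 k)) → ℝ) (k0 : Fin K)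

/-- Identity equivalence between `UB k0 (𝒰 k0)` and `𝒰`. -/
def eIdent : ∀ k, UB (𝒰 := 𝒰) k0 (𝒰 k0) k ≃ 𝒰 k := fun k =>
  if h : k = k0 then
    Equiv.cast (show UB (𝒰 := 𝒰) k0 (𝒰 k0) k = 𝒰 k by
      rw [h]; exact (if_pos rfl))
  else eUBj (𝒰 := 𝒰) k0 (𝒰 k0) k h

lemma q_eq_qB_self (p : (∀ k, 𝒳 k) → ℝ) (hq : InnerWitnessM p q) :
    qB k0 (𝒰 k0) q (mB q k0) (piB q k0) = fun w => q (famEquiv (eIdent (𝒰 := 𝒰) k0) w) := by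
  funext w
  rw [q_factor p q k0 hq (famEquiv (eIdent (𝒰 := 𝒰) k0) w)]
  have h1 : (famEquiv (eIdent (𝒰 := 𝒰) k0) w).1 k0 = eUB0 (𝒰 := 𝒰) k0 (𝒰 k0) (w.1 k0) := by
    show eIdent (𝒰 := 𝒰) k0 k0 (w.1 k0) = _
    unfold eIdent
    rw [dif_pos rfl]
    rfl
  have h2 : projY k0 (famEquiv (eIdent (𝒰 := 𝒰) k0) w) = (PhiB k0 (𝒰 k0) w).2 := by
    refine Prod.ext ?_ rfl
    funext j
    show eIdent (𝒰 := 𝒰) k0 j.1 (w.1 j.1) = _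
    unfold eIdent
    rw [dif_neg j.2, PhiB_snd_fst]
  rw [h1, h2]
  rfl

lemma EE_q_mem (p : (∀ k, 𝒳 k) → ℝ) (hq : InnerWitnessM p q)
    (S T : Finset (Fin K)) (hT : k0 ∈ T) :
    EE q S T = ent (mB q k0) + ∑ b, mB q k0 b *
      gfun q k0 S (T.erase k0) (Finset.notMem_erase k0 T) (piB q k0 b) := by
  have hq0 : ∀ a, 0 ≤ q a := hq.1.1
  have hpk1 : ∑ s, pk q k0 s = 1 := by
    unfold pk
    rw [sum_pmap]
    exact hq.1.2
  calc EE q S T = EE (fun w => q (famEquiv (eIdent (𝒰 := 𝒰) k0) w)) S T :=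
        (transport_EE (eIdent (𝒰 := 𝒰) k0) q S T).symm
    _ = EE (qB k0 (𝒰 k0) q (mB q k0) (piB q k0)) S T := by
        rw [q_eq_qB_self q k0 p hq]
    _ = _ := EE_qB_mem q k0 (𝒰 k0) (mB q k0) (piB q k0) hq0
        (fun b => sum_piB q k0 hq0 b hpk1) (fun b s hs => piB_vanish q k0 hq0 b s hs) S T hT

lemma EE_q_notmem (p : (∀ k, 𝒳 k) → ℝ) (hq : InnerWitnessM p q)
    (S T : Finset (Fin K)) (hT : k0 ∉ T) :
    EE (qB k0 (𝒰 k0) q (mB q k0) (piB q k0)) S T = EE q S T :=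
  EE_qB_notmem q k0 (𝒰 k0) (mB q k0) (piB q k0) hq.1.1 (fun s => marg_piB q k0 hq.1.1 s) S T hT

end StepD4b
section StepD5

variable {𝒰 : Fin K → Type} [∀ k, Fintype (𝒰 k)]
variable (q : ((∀ k, 𝒰 k) × (∀ k, 𝒳 k)) → ℝ) (k0 : Fin K)

/-- The Carathéodory test vector of a candidate conditional distribution. -/
noncomputable def vmap (σp : 𝒳 k0 → ℝ) :
    (𝒳 k0 → ℝ) × ((Finset (Fin K) × {T : Finset (Fin K) // k0 ∉ T}) → ℝ) :=
  (σp, fun i => gfun q k0 i.1 i.2.1 i.2.2 σp)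

lemma card_J_bound :
    Fintype.card (Finset (Fin K) × {T : Finset (Fin K) // k0 ∉ T}) + 1 ≤ 4 ^ K := by
  have hK : 0 < K := k0.pos
  have hsub : Fintype.card {j : Fin K // j ≠ k0} = K - 1 := by
    have h := Fintype.card_subtype_compl (fun j : Fin K => j = k0)
    rw [Fintype.card_subtype_eq, Fintype.card_fin] at h
    exact h
  have h1 : Fintype.card {T : Finset (Fin K) // k0 ∉ T} ≤ 2 ^ (K - 1) := by
    have hinj : Function.Injective (fun T : {T : Finset (Fin K) // k0 ∉ T} =>
        T.1.subtype (fun j => j ≠ k0)) := by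
      intro T1 T2 h
      apply Subtype.ext
      ext j
      by_cases hj : j = k0
      · subst hj
        simp [T1.2, T2.2]
      · have h2 := congrArg (fun s : Finset {j : Fin K // j ≠ k0} =>
          (⟨j, hj⟩ : {j : Fin K // j ≠ k0}) ∈ s) h
        simpa [Finset.mem_subtype] using h2
    calc Fintype.card {T : Finset (Fin K) // k0 ∉ T}
        ≤ Fintype.card (Finset {j : Fin K // j ≠ k0}) := Fintype.card_le_of_injective _ hinj
      _ = 2 ^ Fintype.card {j : Fin K // j ≠ k0} := Fintype.card_finset
      _ = 2 ^ (K - 1) := by rw [hsub]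
  have h2 : Fintype.card (Finset (Fin K) × {T : Finset (Fin K) // k0 ∉ T})
      ≤ 2 ^ K * 2 ^ (K - 1) := by
    rw [Fintype.card_prod, Fintype.card_finset, Fintype.card_fin]
    exact Nat.mul_le_mul_left _ h1
  have h3 : 2 ^ K * 2 ^ (K - 1) + 1 ≤ 4 ^ K := by
    have h4 : (4 : ℕ) ^ K = 2 ^ K * 2 ^ K := by
      rw [← Nat.mul_pow]
    have h5 : 2 ^ (K - 1) + 1 ≤ 2 ^ K := by
      have h6 : K = (K - 1) + 1 := (Nat.succ_pred_eq_of_pos hK).symm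
      conv_rhs => rw [h6]
      rw [pow_succ]
      have : 1 ≤ 2 ^ (K - 1) := Nat.one_le_two_pow
      omega
    calc 2 ^ K * 2 ^ (K - 1) + 1 ≤ 2 ^ K * 2 ^ (K - 1) + 2 ^ K := by
          have : 1 ≤ 2 ^ K := Nat.one_le_two_pow
          omega
      _ = 2 ^ K * (2 ^ (K - 1) + 1) := by ring
      _ ≤ 2 ^ K * 2 ^ K := Nat.mul_le_mul_left _ h5
      _ = 4 ^ K := h4.symm
  omega

lemma caratheodory (p : (∀ k, 𝒳 k) → ℝ) (hq : InnerWitnessM p q) :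
    ∃ (c : ℕ) (ι : Fin c → 𝒰 k0) (w' : Fin c → ℝ),
      c ≤ Fintype.card (𝒳 k0) + 4 ^ K ∧ (∀ i, 0 ≤ w' i) ∧ (∑ i, w' i) = 1 ∧
      ∑ i, w' i • vmap q k0 (piB q k0 (ι i)) = ∑ b, mB q k0 b • vmap q k0 (piB q k0 b) := by
  have hq0 : ∀ a, 0 ≤ q a := hq.1.1
  have hmB1 : ∑ b, mB q k0 b = 1 := by
    unfold mB
    rw [sum_pmap]
    exact hq.1.2
  have hmem : ∑ b, mB q k0 b • vmap q k0 (piB q k0 b)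
      ∈ convexHull ℝ (Set.range (fun b => vmap q k0 (piB q k0 b))) :=
    mem_convexHull_of_exists_fintype (mB q k0) (fun b => vmap q k0 (piB q k0 b))
      (fun b => mB_nonneg q k0 hq0 b) hmB1 (fun b => Set.mem_range_self b) rfl
  obtain ⟨ι', hfin, z, wt, hrange, haff, hpos, hsum1, hcomb⟩ :=
    eq_pos_convex_span_of_mem_convexHull hmem
  letI := hfin
  have hsel : ∀ i', ∃ b, vmap q k0 (piB q k0 b) = z i' :=
    fun i' => hrange (Set.mem_range_self i')
  set eqc := (Fintype.equivFin ι').symm with heqc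
  refine ⟨Fintype.card ι', fun i => Classical.choose (hsel (eqc i)),
    fun i => wt (eqc i), ?_, fun i => le_of_lt (hpos _), ?_, ?_⟩
  · have hb := haff.card_le_finrank_succ
    have hb2 : Module.finrank ℝ (vectorSpan ℝ (Set.range z)) ≤ Module.finrank ℝ
        ((𝒳 k0 → ℝ) × ((Finset (Fin K) × {T : Finset (Fin K) // k0 ∉ T}) → ℝ)) :=
      Submodule.finrank_le _
    have hV : Module.finrank ℝ
        ((𝒳 k0 → ℝ) × ((Finset (Fin K) × {T : Finset (Fin K) // k0 ∉ T}) → ℝ))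
        = Fintype.card (𝒳 k0)
          + Fintype.card (Finset (Fin K) × {T : Finset (Fin K) // k0 ∉ T}) := by
      rw [Module.finrank_prod, Module.finrank_fintype_fun_eq_card,
        Module.finrank_fintype_fun_eq_card]
    have hJ := card_J_bound k0
    omega
  · rw [Equiv.sum_comp eqc wt]
    exact hsum1
  · have hz : ∀ i, vmap q k0 (piB q k0 (Classical.choose (hsel (eqc i)))) = z (eqc i) :=
      fun i => Classical.choose_spec (hsel (eqc i))
    calc ∑ i, wt (eqc i) • vmap q k0 (piB q k0 (Classical.choose (hsel (eqc i))))
        = ∑ i, wt (eqc i) • z (eqc i) := by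
          exact Finset.sum_congr rfl fun i _ => by rw [hz i]
      _ = ∑ i', wt i' • z i' := Equiv.sum_comp eqc (fun i' => wt i' • z i')
      _ = _ := hcomb

end StepD5
section StepD6

variable {𝒰 : Fin K → Type} [∀ k, Fintype (𝒰 k)]

lemma step_lemma (p : (∀ k, 𝒳 k) → ℝ) (q : ((∀ k, 𝒰 k) × (∀ k, 𝒳 k)) → ℝ)
    (hq : InnerWitnessM p q) (k0 : Fin K) :
    ∃ (𝒱 : Fin K → Type) (_ : ∀ k, Fintype (𝒱 k))
      (q' : ((∀ k, 𝒱 k) × (∀ k, 𝒳 k)) → ℝ),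
      InnerWitnessM p q' ∧ (∀ t, InnerIneqM q t → InnerIneqM q' t) ∧
      Fintype.card (𝒱 k0) ≤ Fintype.card (𝒳 k0) + 4 ^ K ∧
      (∀ j, j ≠ k0 → Fintype.card (𝒱 j) = Fintype.card (𝒰 j)) := by
  have hq0 : ∀ a, 0 ≤ q a := hq.1.1
  obtain ⟨c, ι, w', hc, hw0, hw1, hvec⟩ := caratheodory q k0 p hq
  have hfst : ∀ s, ∑ i, w' i * piB q k0 (ι i) s = pk q k0 s := by
    intro s
    have h := congrFun (congrArg Prod.fst hvec) s
    simp only [Prod.fst_sum, Prod.smul_fst, Finset.sum_apply, Pi.smul_apply, smul_eq_mul,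
      vmap] at h
    rw [h]
    exact marg_piB q k0 hq0 s
  have hsnd : ∀ (S T' : Finset (Fin K)) (hT' : k0 ∉ T'),
      ∑ i, w' i * gfun q k0 S T' hT' (piB q k0 (ι i))
        = ∑ b, mB q k0 b * gfun q k0 S T' hT' (piB q k0 b) := by
    intro S T' hT'
    have h := congrFun (congrArg Prod.snd hvec) (S, ⟨T', hT'⟩)
    simpa only [Prod.snd_sum, Prod.smul_snd, Finset.sum_apply, Pi.smul_apply, smul_eq_mul,
      vmap] using h
  have hpk1 : ∑ s, pk q k0 s = 1 := by
    unfold pk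
    rw [sum_pmap]
    exact hq.1.2
  have hσ1 : ∀ i, ∑ s, piB q k0 (ι i) s = 1 := fun i => sum_piB q k0 hq0 (ι i) hpk1
  have hσv : ∀ i s, pk q k0 s = 0 → piB q k0 (ι i) s = 0 :=
    fun i s hs => piB_vanish q k0 hq0 (ι i) s hs
  have hσ0 : ∀ i s, 0 ≤ piB q k0 (ι i) s := fun i s => piB_nonneg q k0 hq0 (ι i) s
  refine ⟨UB (𝒰 := 𝒰) k0 (Fin c), inferInstance,
    qB k0 (Fin c) q w' (fun i => piB q k0 (ι i)), ?_, ?_, ?_, ?_⟩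
  · refine ⟨qB_pmf k0 (Fin c) q w' (fun i => piB q k0 (ι i)) hq0 hw0 hw1 hσ0 hσ1 hσv,
      qB_marg k0 (Fin c) q w' (fun i => piB q k0 (ι i)) hq0 hfst p hq.2.1, ?_⟩
    intro k
    by_cases hk : k = k0
    · subst hk
      exact qB_ci_k0 q k (Fin c) w' (fun i => piB q k (ι i)) hq0 hσv hfst
    · exact qB_ci_k k0 (Fin c) q w' (fun i => piB q k0 (ι i)) p hq hfst k hk
  · intro t ht
    refine innerIneq_transfer q (qB k0 (Fin c) q w' (fun i => piB q k0 (ι i))) k0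
      (ent w' - ent (mB q k0)) ?_ t ht
    intro S T
    by_cases hT : k0 ∈ T
    · rw [if_pos hT, EE_qB_mem q k0 (Fin c) w' (fun i => piB q k0 (ι i)) hq0 hσ1 hσv S T hT,
        EE_q_mem q k0 p hq S T hT, hsnd S (T.erase k0) (Finset.notMem_erase k0 T)]
      ring
    · rw [if_neg hT, EE_qB_notmem q k0 (Fin c) w' (fun i => piB q k0 (ι i)) hq0 hfst S T hT,
        add_zero]
  · have hcard : Fintype.card (UB (𝒰 := 𝒰) k0 (Fin c) k0) = c := by
      rw [Fintype.card_congr (eUB0 (𝒰 := 𝒰) k0 (Fin c)), Fintype.card_fin]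
    rw [hcard]
    exact hc
  · intro j hj
    exact Fintype.card_congr (eUBj (𝒰 := 𝒰) k0 (Fin c) j hj)

end StepD6
section Main

lemma iterate_steps (p : (∀ k, 𝒳 k) → ℝ) :
    ∀ (n : ℕ), n ≤ K →
    ∀ (𝒰 : Fin K → Type) (inst : ∀ k, Fintype (𝒰 k))
      (q : ((∀ k, 𝒰 k) × (∀ k, 𝒳 k)) → ℝ), InnerWitnessM p q →
    ∀ t, InnerIneqM q t →
    ∃ (𝒱 : Fin K → Type) (instV : ∀ k, Fintype (𝒱 k))
      (q' : ((∀ k, 𝒱 k) × (∀ k, 𝒳 k)) → ℝ),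
      InnerWitnessM p q' ∧ InnerIneqM q' t ∧
      ∀ k : Fin K, (k : ℕ) < n → Fintype.card (𝒱 k) ≤ Fintype.card (𝒳 k) + 4 ^ K := by
  intro n
  induction n with
  | zero =>
    intro _ 𝒰 inst q hq t ht
    exact ⟨𝒰, inst, q, hq, ht, fun k hk => absurd hk (by omega)⟩
  | succ n ih =>
    intro hn 𝒰 inst q hq t ht
    obtain ⟨𝒱, instV, q', hq', ht', hcard⟩ := ih (by omega) 𝒰 inst q hq t ht
    letI := instV
    obtain ⟨𝒲, instW, q'', hq'', htrans, hcard0, hcardj⟩ :=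
      step_lemma p q' hq' (⟨n, by omega⟩ : Fin K)
    refine ⟨𝒲, instW, q'', hq'', htrans t ht', ?_⟩
    intro k hk
    by_cases hkn : k = (⟨n, by omega⟩ : Fin K)
    · rw [hkn]
      exact hcard0
    · rw [hcardj k hkn]
      refine hcard k ?_
      have hne : (k : ℕ) ≠ n := fun h => hkn (Fin.ext h)
      omega

end Main
/-- **Proposition 4 (cardinality bound for the multi-source inner bound):** the region `R_i`
is unchanged when each auxiliary `U_k` is required to take at most `|𝒳_k| + 4^K` values. -/
theorem multi_source_inner_bound_cardinality (p : (∀ k, 𝒳 k) → ℝ) (hp : IsPMF p) :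
    RiM p = RiMBounded p := by
  ext t
  constructor
  · rintro ⟨𝒰, inst, q, hq, ht⟩
    letI := inst
    obtain ⟨𝒱, instV, q', hq', ht', hcard⟩ :=
      iterate_steps p K (le_refl K) 𝒰 inst q hq t ht
    letI := instV
    refine ⟨fun k => Fintype.card (𝒱 k), fun k => hcard k k.2, ?_⟩
    set e : ∀ k, Fin (Fintype.card (𝒱 k)) ≃ 𝒱 k := fun k => (Fintype.equivFin (𝒱 k)).symm
      with he
    exact ⟨fun w => q' (famEquiv e w), transport_witness e p q' hq', transport_ineq e q' t ht'⟩
  · rintro ⟨c, hc, q, h1, h2⟩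
    exact ⟨fun k => Fin (c k), inferInstance, q, h1, h2⟩

end Biclustering
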